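/- arXiv:2503.07299 — 7 statements merged into one kernel-verified Lean document; each statement's English description precedes it below -/
import Mathlib

section
/- Let q be a prime power, n, k ∈ ℕ with k ≤ n, and let P ∈ GL_n(F_q). Suppose there exists α ∈ F_q such that the eigenspace ker(P − α·I) has dimension at least n − k. Then the conjugacy class Conj(P) = {T P T⁻¹ : T ∈ GL_n(F_q)} satisfies |Conj(P)| · (q−1)^n ≤ q^{2kn + n − k²}. -/
open Module Submodule LinearMap

set_option maxHeartbeats 1000000
set_option synthInstance.maxHeartbeats 1000000

lemma aux_GL_lower (F : Type) [Field F] [Fintype F] [DecidableEq F] (V : Type)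
    [AddCommGroup V] [Module F V] [FiniteDimensional F V] :
    (Fintype.card F - 1) ^ (finrank F V) *
      Fintype.card F ^ (finrank F V * finrank F V - finrank F V)
    ≤ Nat.card (Module.End F V)ˣ := by
  classical
  set q := Fintype.card F with hq
  have hq2 : 2 ≤ q := Fintype.one_lt_card
  set d := finrank F V with hd
  have e1 : Nat.card (Module.End F V)ˣ = Nat.card (GL (Fin d) F) := by
    refine Nat.card_congr (Units.mapEquiv ?_).toEquiv
    exact (LinearMap.toMatrixAlgEquiv (finBasis F V)).toRingEquiv.toMulEquiv
  rw [e1, Matrix.card_GL_field]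
  calc (q - 1) ^ d * q ^ (d * d - d) = ∏ _i : Fin d, ((q - 1) * q ^ (d - 1)) := by
        rw [Finset.prod_const]
        rw [mul_pow, ← pow_mul]
        rcases Nat.eq_zero_or_pos d with h | h
        · simp [h]
        · congr 2
          · simp
          · cases d with
            | zero => omega
            | succ d' => simp [Nat.succ_sub_one]; ring_nf; omega
    _ ≤ ∏ i : Fin d, (q ^ d - q ^ (i : ℕ)) := by
        refine Finset.prod_le_prod (by intros; positivity) ?_
        intro i _
        have hi : (i : ℕ) ≤ d - 1 := by omega
        have h1 : q ^ (i : ℕ) ≤ q ^ (d - 1) := Nat.pow_le_pow_right (by omega) hi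
        have h2 : (q - 1) * q ^ (d - 1) = q ^ d - q ^ (d - 1) := by
          have hd1 : d - 1 + 1 = d := by have := i.2; omega
          rw [Nat.sub_mul, one_mul, ← pow_succ', hd1]
        omega

lemma aux_count (F : Type) [Field F] [Fintype F] [DecidableEq F] (n : ℕ)
    (NL : (Fin n → F) →ₗ[F] (Fin n → F)) :
    (Fintype.card F - 1) ^ (finrank F (LinearMap.ker NL)) *
      Fintype.card F ^ (finrank F (LinearMap.ker NL) * finrank F (LinearMap.ker NL)
        - finrank F (LinearMap.ker NL))
    ≤ Nat.card {f : (Fin n → F) →ₗ[F] (Fin n → F) //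
        Function.Bijective f ∧ f ∘ₗ NL = NL ∧ NL ∘ₗ f = NL} := by
  classical
  set q := Fintype.card F with hq
  set E := LinearMap.ker NL with hE
  set W := LinearMap.range NL with hW
  set d := finrank F E with hd
  set U := W ⊓ E with hU
  obtain ⟨V', hV'⟩ := Submodule.exists_isCompl (Submodule.comap W.subtype U)
  set W₁ := Submodule.map W.subtype V' with hW₁
  have hUW : U ≤ W := inf_le_left
  have hUE : U ≤ E := inf_le_right
  have hW₁W : W₁ ≤ W := map_subtype_le W V'
  have hsupUW₁ : U ⊔ W₁ = W := by
    have h1 := congrArg (Submodule.map W.subtype) hV'.sup_eq_top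
    rwa [Submodule.map_sup, Submodule.map_comap_subtype, Submodule.map_top,
      Submodule.range_subtype, inf_eq_right.mpr hUW] at h1
  have hdisjUW₁ : U ⊓ W₁ = ⊥ := by
    have h1 := congrArg (Submodule.map W.subtype) hV'.inf_eq_bot
    rwa [Submodule.map_inf _ (Submodule.injective_subtype W), Submodule.map_comap_subtype,
      Submodule.map_bot, inf_eq_right.mpr hUW] at h1
  have hdisjEW₁ : E ⊓ W₁ = ⊥ := by
    apply le_antisymm _ bot_le
    intro x hx
    have : x ∈ U ⊓ W₁ := ⟨⟨hW₁W hx.2, hx.1⟩, hx.2⟩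
    rwa [hdisjUW₁] at this
  have hrank : finrank F W + d = n := by
    have := LinearMap.finrank_range_add_finrank_ker NL
    simpa [Module.finrank_fintype_fun_eq_card] using this
  have hW₁U : finrank F W₁ + finrank F U = finrank F W := by
    have := Submodule.finrank_sup_add_finrank_inf_eq U W₁
    rw [hsupUW₁, hdisjUW₁] at this
    simp only [finrank_bot, add_zero] at this
    omega
  obtain ⟨C, hC⟩ := Submodule.exists_isCompl (E ⊔ W₁)
  have hEW₁rank : finrank F ↥(E ⊔ W₁) = d + finrank F W₁ := by
    have := Submodule.finrank_sup_add_finrank_inf_eq E W₁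
    rw [hdisjEW₁] at this
    simp only [finrank_bot, add_zero] at this
    omega
  have hCrank : finrank F C + finrank F ↥(E ⊔ W₁) = n := by
    have := Submodule.finrank_sup_add_finrank_inf_eq (E ⊔ W₁) C
    rw [hC.sup_eq_top, hC.inf_eq_bot] at this
    simp only [finrank_bot, add_zero, finrank_top, Module.finrank_fintype_fun_eq_card,
      Fintype.card_fin] at this
    omega
  have hK₀rank : finrank F ↥(W₁ ⊔ C) ≤ finrank F ↥W₁ + finrank F ↥C := by
    have h1 := Submodule.finrank_sup_add_finrank_inf_eq W₁ C
    omega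
  have hEK₀ : IsCompl E (W₁ ⊔ C) := by
    have hcod : Codisjoint E (W₁ ⊔ C) := by
      rw [codisjoint_iff, ← sup_assoc]
      exact codisjoint_iff.mp hC.codisjoint
    refine ⟨?_, hcod⟩
    rw [disjoint_iff]
    have h1 := Submodule.finrank_sup_add_finrank_inf_eq E (W₁ ⊔ C)
    rw [codisjoint_iff.mp hcod] at h1
    have h2 : finrank F (⊤ : Submodule F (Fin n → F)) = n := by
      simp [finrank_top, Module.finrank_fintype_fun_eq_card]
    have h3 : finrank F ↥(E ⊓ (W₁ ⊔ C)) = 0 := by omega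
    exact Submodule.finrank_eq_zero.mp h3
  set p := E.projectionOnto (W₁ ⊔ C) hEK₀ with hp
  set Esup := E ⊔ W₁ with hEsup
  -- tuple spanning U'' := comap E.subtype U
  set U'' := Submodule.comap E.subtype U with hU''
  set t := finrank F U'' with ht
  haveI : Module.Free F ↥U'' := Module.Free.of_divisionRing F ↥U''
  set b := finBasis F ↥U'' with hb
  set u : Fin t → E := fun i => ((b i : U'') : E) with hu
  set stab := MulAction.stabilizer (Module.End F E)ˣ u with hstab
  have hspan : Submodule.span F (Set.range u) = U'' := by
    have h1 : Set.range u = U''.subtype '' (Set.range b) := by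
      ext x
      simp [hu, Set.range_comp]
      exact Iff.rfl
    rw [h1, ← Submodule.map_span, b.span_eq, Submodule.map_top, Submodule.range_subtype]
  have hfixmem : ∀ g : (Module.End F E)ˣ, g ∈ stab →
      ∀ x : E, x ∈ U'' → (g : Module.End F E) x = x := by
    intro g hg x hx
    rw [← hspan] at hx
    induction hx using Submodule.span_induction with
    | mem y hy =>
      obtain ⟨i, rfl⟩ := hy
      have h2 := congrFun (MulAction.mem_stabilizer_iff.mp hg) i
      exact h2
    | zero => simp
    | add a c _ _ hia hic => simp [map_add, hia, hic]
    | smul cc a _ hia => simp [map_smul, hia]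
  have hpW : ∀ w, w ∈ W → p w ∈ U'' := by
    intro w hw
    rw [← hsupUW₁] at hw
    obtain ⟨a, ha, c, hc, rfl⟩ := Submodule.mem_sup.mp hw
    have hpa : p a = ⟨a, hUE ha⟩ := by
      have := Submodule.linearProjOfIsCompl_apply_left hEK₀ ⟨a, hUE ha⟩
      simpa using this
    have hpc : p c = 0 :=
      Submodule.projectionOnto_apply_of_mem_right hEK₀ (le_sup_left (a := W₁) (b := C) hc)
    rw [map_add, hpa, hpc, add_zero]
    simpa [hU'', Submodule.mem_comap] using ha
  have hWEsup : W ≤ Esup := by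
    rw [← hsupUW₁, hEsup]
    exact sup_le_sup_right hUE W₁
  -- the map
  set fm : (Module.End F E)ˣ → (((Fin n → F) ⧸ Esup) →ₗ[F] E) →
      ((Fin n → F) →ₗ[F] (Fin n → F)) := fun g ζ =>
    LinearMap.id + E.subtype ∘ₗ (((g : Module.End F E) - LinearMap.id) ∘ₗ p + ζ ∘ₗ Esup.mkQ)
    with hfm
  have hfm_apply : ∀ g ζ v, fm g ζ v
      = v + (((g : Module.End F E) (p v) - p v : E) : Fin n → F) + ((ζ (Esup.mkQ v) : E) : Fin n → F) := by
    intro g ζ v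
    simp [hfm, add_assoc]
  have hfmE : ∀ g ζ (x : E), fm g ζ (x : Fin n → F) = (((g : Module.End F E) x : E) : Fin n → F) := by
    intro g ζ x
    rw [hfm_apply]
    have h1 : p ((x : Fin n → F)) = x := Submodule.linearProjOfIsCompl_apply_left hEK₀ x
    have h2 : Esup.mkQ (x : Fin n → F) = 0 :=
      (Submodule.Quotient.mk_eq_zero _).mpr (le_sup_left (a := E) (b := W₁) x.2)
    rw [h1, h2]
    push_cast
    simp
  have hfmW : ∀ g ∈ stab, ∀ ζ, ∀ w ∈ W, fm g ζ w = w := by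
    intro g hg ζ w hw
    rw [hfm_apply]
    have h1 : (g : Module.End F E) (p w) = p w := hfixmem g hg (p w) (hpW w hw)
    have h2 : Esup.mkQ w = 0 := (Submodule.Quotient.mk_eq_zero _).mpr (hWEsup hw)
    rw [h1, h2]
    simp
  have hginj : ∀ g : (Module.End F E)ˣ, Function.Injective ⇑(g : Module.End F E) := by
    intro g a c h
    have h1 := congrArg ⇑((g⁻¹ : (Module.End F E)ˣ) : Module.End F E) h
    simpa [← Module.End.mul_apply, ← Units.val_mul] using h1
  have hbij : ∀ g ζ, Function.Bijective (fm g ζ) := by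
    intro g ζ
    have hinj : Function.Injective (fm g ζ) := by
      have h0 : ∀ v, fm g ζ v = 0 → v = 0 := by
        intro v hv
        rw [hfm_apply] at hv
        rw [add_assoc] at hv
        have hvE : v ∈ E := by
          have h1 : v = -(((((g : Module.End F E) (p v) - p v : E) : Fin n → F))
              + ((ζ (Esup.mkQ v) : E) : Fin n → F)) :=
            eq_neg_of_add_eq_zero_left hv
          rw [h1]
          exact neg_mem (Submodule.add_mem E (Submodule.coe_mem _) (Submodule.coe_mem _))
        have h2 : fm g ζ v = (((g : Module.End F E) ⟨v, hvE⟩ : E) : Fin n → F) :=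
          hfmE g ζ ⟨v, hvE⟩
        rw [hfm_apply, add_assoc, hv] at h2
        have h3 : (g : Module.End F E) ⟨v, hvE⟩ = 0 := by
          exact Subtype.coe_injective h2.symm
        have h4 : (⟨v, hvE⟩ : E) = 0 := hginj g (by rw [h3, map_zero])
        exact congrArg Subtype.val h4
      intro a c hac
      have := h0 (a - c) (by rw [map_sub, hac, sub_self])
      exact sub_eq_zero.mp this
    exact ⟨hinj, (LinearMap.injective_iff_surjective).mp hinj⟩
  have hmemH : ∀ g ∈ stab, ∀ ζ, Function.Bijective (fm g ζ)
      ∧ (fm g ζ) ∘ₗ NL = NL ∧ NL ∘ₗ (fm g ζ) = NL := by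
    intro g hg ζ
    refine ⟨hbij g ζ, ?_, ?_⟩
    · apply LinearMap.ext; intro v
      have h1 : NL v ∈ W := ⟨v, rfl⟩
      simpa [LinearMap.comp_apply] using hfmW g hg ζ (NL v) h1
    · apply LinearMap.ext; intro v
      rw [LinearMap.comp_apply, hfm_apply]
      have h2 : NL ((((g : Module.End F E) (p v) - p v : E)) : Fin n → F) = 0 := by
        exact LinearMap.mem_ker.mp (Submodule.coe_mem (((g : Module.End F E) (p v) - p v : E)))
      have h3 : NL (((ζ (Esup.mkQ v) : E)) : Fin n → F) = 0 := by
        exact LinearMap.mem_ker.mp (Submodule.coe_mem ((ζ (Esup.mkQ v) : E)))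
      rw [map_add, map_add, h2, h3, add_zero, add_zero]
  haveI : Finite ((Fin n → F) →ₗ[F] (Fin n → F)) := Finite.of_injective _ DFunLike.coe_injective
  let Ψ : stab × (((Fin n → F) ⧸ Esup) →ₗ[F] E) →
      {f : (Fin n → F) →ₗ[F] (Fin n → F) //
        Function.Bijective f ∧ f ∘ₗ NL = NL ∧ NL ∘ₗ f = NL} := fun gz =>
    ⟨fm gz.1.1 gz.2, hmemH gz.1.1 gz.1.2 gz.2⟩
  have hΨinj : Function.Injective Ψ := by
    rintro ⟨⟨g, hg⟩, ζ⟩ ⟨⟨g', hg'⟩, ζ'⟩ h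
    have hf : fm g ζ = fm g' ζ' := congrArg Subtype.val h
    have hgg : g = g' := by
      apply Units.ext
      apply LinearMap.ext
      intro x
      have h1 : fm g ζ (x : Fin n → F) = fm g' ζ' (x : Fin n → F) := by rw [hf]
      rw [hfmE g ζ x, hfmE g' ζ' x] at h1
      exact Subtype.coe_injective h1
    subst hgg
    have hζζ : ζ = ζ' := by
      apply LinearMap.ext
      intro y
      obtain ⟨v, rfl⟩ := Esup.mkQ_surjective y
      have h1 : fm g ζ v = fm g ζ' v := by rw [hf]
      rw [hfm_apply, hfm_apply] at h1
      have h2 := add_left_cancel h1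
      exact Subtype.coe_injective h2
    simp only [hζζ]
  haveI : Fintype E := Fintype.ofFinite E
  have hcardE : Fintype.card E = q ^ d := card_eq_pow_finrank
  have horbit : Nat.card (MulAction.orbit (Module.End F E)ˣ u) * Nat.card stab
      = Nat.card (Module.End F E)ˣ := by
    have h1 := Nat.card_congr (MulAction.orbitProdStabilizerEquivGroup (Module.End F E)ˣ u)
    rw [Nat.card_prod] at h1
    exact h1
  have hQrank : finrank F ((Fin n → F) ⧸ Esup) = t := by
    have h1 := Submodule.finrank_quotient_add_finrank Esup
    have h2 : finrank F ↥U'' = finrank F ↥U := (Submodule.comapSubtypeEquivOfLe hUE).finrank_eq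
    rw [Module.finrank_fintype_fun_eq_card, Fintype.card_fin] at h1
    omega
  have horb_le : Nat.card (MulAction.orbit (Module.End F E)ˣ u) ≤ q ^ (t * d) := by
    have h1 : Nat.card (MulAction.orbit (Module.End F E)ˣ u) ≤ Nat.card (Fin t → E) :=
      Nat.card_le_card_of_injective Subtype.val Subtype.val_injective
    have h2 : Nat.card (Fin t → E) = (q ^ d) ^ t := by
      rw [Nat.card_eq_fintype_card, Fintype.card_fun, hcardE, Fintype.card_fin]
    rw [h2, ← pow_mul, mul_comm d t] at h1
    exact h1
  haveI : Finite (((Fin n → F) ⧸ Esup) →ₗ[F] E) := Finite.of_injective _ DFunLike.coe_injective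
  haveI : Fintype (((Fin n → F) ⧸ Esup) →ₗ[F] E) := Fintype.ofFinite _
  have hHom : Nat.card (((Fin n → F) ⧸ Esup) →ₗ[F] E) = q ^ (t * d) := by
    rw [Nat.card_eq_fintype_card, card_eq_pow_finrank (K := F), Module.finrank_linearMap, hQrank, hd]
  have hGLE := aux_GL_lower F E
  rw [← hd, ← hq] at hGLE
  calc (q - 1) ^ d * q ^ (d * d - d)
      ≤ Nat.card (Module.End F E)ˣ := hGLE
    _ = Nat.card (MulAction.orbit (Module.End F E)ˣ u) * Nat.card stab := horbit.symm
    _ ≤ q ^ (t * d) * Nat.card stab := Nat.mul_le_mul_right _ horb_le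
    _ = Nat.card stab * Nat.card (((Fin n → F) ⧸ Esup) →ₗ[F] E) := by rw [hHom]; ring
    _ = Nat.card (stab × (((Fin n → F) ⧸ Esup) →ₗ[F] E)) := (Nat.card_prod _ _).symm
    _ ≤ Nat.card {f : (Fin n → F) →ₗ[F] (Fin n → F) //
        Function.Bijective f ∧ f ∘ₗ NL = NL ∧ NL ∘ₗ f = NL} :=
      Nat.card_le_card_of_injective Ψ hΨinj



/-- if `P ∈ GL_n(F_q)` has an eigenspace of dimension at least `n − k` for some
eigenvalue `α ∈ F_q`, then `|Conj(P)| · (q−1)^n ≤ q^{2kn + n − k²}`. -/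
theorem stmt_10 (F : Type) [Field F] [Fintype F] [DecidableEq F] (n k : ℕ) (hk : k ≤ n)
    (P : GL (Fin n) F)
    (hP : ∃ α : F, n - k ≤ Module.finrank F
        (LinearMap.ker (Matrix.toLin' ((P : Matrix (Fin n) (Fin n) F)
          - α • (1 : Matrix (Fin n) (Fin n) F))))) :
    (Nat.card {Q : GL (Fin n) F // ∃ T : GL (Fin n) F, Q = T * P * T⁻¹} : ℝ)
        * ((Fintype.card F : ℝ) - 1) ^ n
      ≤ (Fintype.card F : ℝ) ^ (2 * (k : ℤ) * n + n - (k : ℤ) ^ 2) := by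
  classical
  obtain ⟨α, hα⟩ := hP
  have hq2 : 2 ≤ Fintype.card F := Fintype.one_lt_card
  set q := Fintype.card F with hq
  set NL := Matrix.toLin' ((P : Matrix (Fin n) (Fin n) F) - α • (1 : Matrix (Fin n) (Fin n) F))
    with hNL
  set d := Module.finrank F (LinearMap.ker NL) with hd
  have hdn : d ≤ n := by
    have h1 := Submodule.finrank_le (LinearMap.ker NL)
    rw [Module.finrank_fintype_fun_eq_card, Fintype.card_fin] at h1
    omega
  -- the count from aux_count
  have hHcard : (q - 1) ^ d * q ^ (d * d - d) ≤ Nat.card {f : (Fin n → F) →ₗ[F] (Fin n → F) //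
      Function.Bijective f ∧ f ∘ₗ NL = NL ∧ NL ∘ₗ f = NL} := by
    have := aux_count F n NL
    rw [← hd, ← hq] at this
    exact this
  -- injection into the stabilizer
  set stab := MulAction.stabilizer (ConjAct (GL (Fin n) F)) P with hstab
  haveI : Finite (GL (Fin n) F) := inferInstance
  have hstabcard : Nat.card {f : (Fin n → F) →ₗ[F] (Fin n → F) //
      Function.Bijective f ∧ f ∘ₗ NL = NL ∧ NL ∘ₗ f = NL} ≤ Nat.card stab := by
    set HT := {f : (Fin n → F) →ₗ[F] (Fin n → F) //
      Function.Bijective f ∧ f ∘ₗ NL = NL ∧ NL ∘ₗ f = NL} with hHT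
    let unitOf : HT → GL (Fin n) F := fun h =>
      { val := LinearMap.toMatrix' h.val
        inv := LinearMap.toMatrix'
          (((LinearEquiv.ofBijective h.val h.2.1).symm : (Fin n → F) ≃ₗ[F] (Fin n → F))
            : (Fin n → F) →ₗ[F] (Fin n → F))
        val_inv := by
          rw [← LinearMap.toMatrix'_comp, ← LinearMap.toMatrix'_id (R := F) (n := Fin n)]
          congr 1
          apply LinearMap.ext
          intro x
          simp
        inv_val := by
          rw [← LinearMap.toMatrix'_comp, ← LinearMap.toMatrix'_id (R := F) (n := Fin n)]
          congr 1
          apply LinearMap.ext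
          intro x
          simp }
    have hcomm : ∀ h : HT, (unitOf h).val * (P : Matrix (Fin n) (Fin n) F)
        = (P : Matrix (Fin n) (Fin n) F) * (unitOf h).val := by
      intro h
      have hPL : Matrix.toLin' (P : Matrix (Fin n) (Fin n) F) = NL + α • LinearMap.id := by
        rw [hNL, map_sub, map_smul, Matrix.toLin'_one]
        module
      have h1 : h.val ∘ₗ Matrix.toLin' (P : Matrix (Fin n) (Fin n) F)
          = Matrix.toLin' (P : Matrix (Fin n) (Fin n) F) ∘ₗ h.val := by
        rw [hPL]
        apply LinearMap.ext
        intro v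
        have h2 := LinearMap.ext_iff.mp h.2.2.1 v
        have h3 := LinearMap.ext_iff.mp h.2.2.2 v
        simp only [LinearMap.comp_apply] at h2 h3
        simp only [LinearMap.add_apply, LinearMap.comp_apply, LinearMap.smul_apply,
          LinearMap.id_apply, map_add, map_smul, h2, h3]
      calc (unitOf h).val * (P : Matrix (Fin n) (Fin n) F)
          = LinearMap.toMatrix' h.val
            * LinearMap.toMatrix' (Matrix.toLin' (P : Matrix (Fin n) (Fin n) F)) := by
            rw [LinearMap.toMatrix'_toLin']
        _ = LinearMap.toMatrix' (h.val ∘ₗ Matrix.toLin' (P : Matrix (Fin n) (Fin n) F)) :=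
            (LinearMap.toMatrix'_comp _ _).symm
        _ = LinearMap.toMatrix' (Matrix.toLin' (P : Matrix (Fin n) (Fin n) F) ∘ₗ h.val) := by
            rw [h1]
        _ = LinearMap.toMatrix' (Matrix.toLin' (P : Matrix (Fin n) (Fin n) F))
            * LinearMap.toMatrix' h.val := LinearMap.toMatrix'_comp _ _
        _ = (P : Matrix (Fin n) (Fin n) F) * (unitOf h).val := by
            rw [LinearMap.toMatrix'_toLin']
    have hmem : ∀ h : HT, ConjAct.toConjAct (unitOf h) ∈ stab := by
      intro h
      rw [hstab, MulAction.mem_stabilizer_iff, ConjAct.toConjAct_smul]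
      have h1 : unitOf h * P = P * unitOf h := by
        apply Units.ext
        exact hcomm h
      rw [h1, mul_inv_cancel_right]
    let Φ : HT → stab := fun h => ⟨ConjAct.toConjAct (unitOf h), hmem h⟩
    have hΦinj : Function.Injective Φ := by
      intro h h' he
      have h1 : ConjAct.toConjAct (unitOf h) = ConjAct.toConjAct (unitOf h') :=
        congrArg Subtype.val he
      have h2 : unitOf h = unitOf h' := ConjAct.toConjAct.injective h1
      have h3 : LinearMap.toMatrix' h.val = LinearMap.toMatrix' h'.val :=
        congrArg Units.val h2
      exact Subtype.ext (LinearMap.toMatrix'.injective h3)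
    exact Nat.card_le_card_of_injective Φ hΦinj
  -- orbit-stabilizer
  have horbeq : Nat.card {Q : GL (Fin n) F // ∃ T : GL (Fin n) F, Q = T * P * T⁻¹}
      = Nat.card (MulAction.orbit (ConjAct (GL (Fin n) F)) P) := by
    apply Nat.card_congr
    apply Equiv.subtypeEquivRight
    intro Q
    constructor
    · rintro ⟨T, rfl⟩
      exact ⟨ConjAct.toConjAct T, by simp [ConjAct.toConjAct_smul]⟩
    · rintro ⟨g, rfl⟩
      exact ⟨ConjAct.ofConjAct g, by simp [ConjAct.smul_def]⟩
  have hos : Nat.card (MulAction.orbit (ConjAct (GL (Fin n) F)) P) * Nat.card stab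
      = Nat.card (GL (Fin n) F) := by
    have h1 := Nat.card_congr (MulAction.orbitProdStabilizerEquivGroup (ConjAct (GL (Fin n) F)) P)
    rw [Nat.card_prod] at h1
    rw [h1]
    exact Nat.card_congr ConjAct.ofConjAct.toEquiv
  have hGle : Nat.card (GL (Fin n) F) ≤ q ^ (n * n) := by
    have h1 : Nat.card (GL (Fin n) F) ≤ Nat.card (Matrix (Fin n) (Fin n) F) :=
      Nat.card_le_card_of_injective Units.val Units.val_injective
    have h2 : Nat.card (Matrix (Fin n) (Fin n) F) = q ^ (n * n) := by
      rw [Nat.card_eq_fintype_card]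
      show Fintype.card (Fin n → Fin n → F) = q ^ (n * n)
      rw [Fintype.card_fun, Fintype.card_fun, Fintype.card_fin, ← pow_mul]
    omega
  -- natural-number inequality
  set cS := Nat.card {Q : GL (Fin n) F // ∃ T : GL (Fin n) F, Q = T * P * T⁻¹} with hcS
  have hkk : k * k ≤ 2 * k * n := by nlinarith
  have hkey : cS * (q - 1) ^ n ≤ q ^ (2 * k * n + n - k * k) := by
    set m := n - d with hm
    have hmd : m + d = n := by omega
    have hmk : m ≤ k := by omega
    set B := (q - 1) ^ d * q ^ (d * d - d) with hB
    have hBpos : 0 < B := Nat.mul_pos (Nat.pow_pos (by omega))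
      (Nat.pow_pos (by omega))
    have h1 : cS * B ≤ q ^ (n * n) := by
      calc cS * B ≤ cS * Nat.card stab :=
            Nat.mul_le_mul_left _ (le_trans hHcard hstabcard)
        _ = Nat.card (GL (Fin n) F) := by rw [horbeq]; exact hos
        _ ≤ q ^ (n * n) := hGle
    have hexp : n * n + m ≤ (2 * k * n + n - k * k) + (d * d - d) := by
      have hdd : d ≤ d * d := by nlinarith
      have hkk' : k * k ≤ 2 * k * n + n := by omega
      zify [hkk', hdd]
      nlinarith [mul_nonneg (by push_cast; omega : (0:ℤ) ≤ (k : ℤ) - (m : ℤ))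
        (by push_cast; omega : (0:ℤ) ≤ 2 * (n : ℤ) - (k : ℤ) - (m : ℤ))]
    have h2 : q ^ (n * n) * (q - 1) ^ n ≤ q ^ (2 * k * n + n - k * k) * B := by
      have e1 : (q - 1) ^ n = (q - 1) ^ d * (q - 1) ^ m := by
        rw [← pow_add]
        congr 1
        omega
      rw [e1, hB]
      have h3 : (q - 1) ^ m ≤ q ^ m := Nat.pow_le_pow_left (by omega) m
      calc q ^ (n * n) * ((q - 1) ^ d * (q - 1) ^ m)
          ≤ q ^ (n * n) * ((q - 1) ^ d * q ^ m) :=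
            Nat.mul_le_mul_left _ (Nat.mul_le_mul_left _ h3)
        _ = (q - 1) ^ d * q ^ (n * n + m) := by rw [pow_add]; ring
        _ ≤ (q - 1) ^ d * q ^ ((2 * k * n + n - k * k) + (d * d - d)) :=
            Nat.mul_le_mul_left _ (Nat.pow_le_pow_right (by omega) hexp)
        _ = q ^ (2 * k * n + n - k * k) * ((q - 1) ^ d * q ^ (d * d - d)) := by
            rw [pow_add]; ring
    have h4 : cS * (q - 1) ^ n * B ≤ q ^ (2 * k * n + n - k * k) * B := by
      calc cS * (q - 1) ^ n * B = (cS * B) * (q - 1) ^ n := by ring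
        _ ≤ q ^ (n * n) * (q - 1) ^ n := Nat.mul_le_mul_right _ h1
        _ ≤ q ^ (2 * k * n + n - k * k) * B := h2
    exact Nat.le_of_mul_le_mul_right h4 hBpos
  -- cast to ℝ
  have hqe : (2 * (k : ℤ) * n + n - (k : ℤ) ^ 2) = ((2 * k * n + n - k * k : ℕ) : ℤ) := by
    have hkk' : k * k ≤ 2 * k * n + n := by omega
    rw [Nat.cast_sub hkk']
    push_cast
    ring
  rw [hqe, zpow_natCast]
  have hcast : ((q : ℝ) - 1) = ((q - 1 : ℕ) : ℝ) := by
    have h1 : (1 : ℕ) ≤ q := by omega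
    push_cast [h1]
    ring
  rw [hcast, ← Nat.cast_pow, ← Nat.cast_mul, ← Nat.cast_pow]
  exact_mod_cast hkey
end

section
/- Let F be a finite field, n, m ∈ ℕ, and let P : F^n → F^n and Q : F^m → F^m be invertible F-linear maps. Suppose F^n = U₁ ⊕ U₂ where U₂ is P-invariant, and U₁ has an ordered basis (a₁, …, a_ℓ) such that P(a_i) = a_{i+1} for all 1 ≤ i < ℓ and P(a_ℓ) ∈ U₁. Then for every integer t with 1 ≤ t ≤ ℓ, the dimension of Fix(P,Q) is at most n²m − (t−1)(n−t)m. -/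
open TensorProduct

lemma sumExtend_inl {K V ι : Type*} [DivisionRing K] [AddCommGroup V] [Module K V]
    {v : ι → V} (hs : LinearIndependent K v) (i : ι) :
    Module.Basis.sumExtend hs (Sum.inl i) = v i := by
  simp [Module.Basis.sumExtend, Equiv.Set.sumDiffSubset, Module.Basis.extend_apply_self,
    Equiv.Set.union, Equiv.Set.union', Equiv.ofInjective, Equiv.sumCongr, Equiv.ofLeftInverse]
  rfl


/-- The subspace `Fix(P,Q)` of bilinear maps `φ : F^n × F^n → F^m` (presented as linear maps
on the tensor square, which identifies bilinear maps with linear maps) satisfying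
`φ(P v₁, P v₂) = Q (φ v₁ v₂)` for all `v₁, v₂`. -/
def fixSubmodule {F : Type*} [Field F] {n m : ℕ}
    (P : (Fin n → F) ≃ₗ[F] (Fin n → F)) (Q : (Fin m → F) ≃ₗ[F] (Fin m → F)) :
    Submodule F ((Fin n → F) ⊗[F] (Fin n → F) →ₗ[F] (Fin m → F)) where
  carrier := {φ | ∀ v₁ v₂ : Fin n → F, φ (P v₁ ⊗ₜ[F] P v₂) = Q (φ (v₁ ⊗ₜ[F] v₂))}
  add_mem' := by
    intro a b ha hb v₁ v₂
    simp [ha v₁ v₂, hb v₁ v₂]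
  zero_mem' := by intro v₁ v₂; simp
  smul_mem' := by
    intro c a ha v₁ v₂
    simp [ha v₁ v₂]

set_option maxHeartbeats 1000000 in
/-- if `F^n = U₁ ⊕ U₂` with `U₂` a `P`-invariant subspace and `U₁` spanned by a
chain `a₁, …, a_ℓ` with `P aᵢ = aᵢ₊₁` for `i < ℓ` and `P a_ℓ ∈ U₁`, then for every integer
`1 ≤ t ≤ ℓ`, `dim Fix(P,Q) ≤ n²m − (t−1)(n−t)m`. -/
theorem stmt_11 (F : Type) [Field F] [Fintype F] (n m ℓ : ℕ)
    (P : (Fin n → F) ≃ₗ[F] (Fin n → F)) (Q : (Fin m → F) ≃ₗ[F] (Fin m → F))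
    (U₁ U₂ : Submodule F (Fin n → F)) (hcompl : IsCompl U₁ U₂)
    (hU₂ : ∀ x ∈ U₂, P x ∈ U₂)
    (a : Fin ℓ → (Fin n → F)) (hind : LinearIndependent F a)
    (hspan : Submodule.span F (Set.range a) = U₁)
    (hchain : ∀ i : Fin ℓ, ∀ h : i.1 + 1 < ℓ, P (a i) = a ⟨i.1 + 1, h⟩)
    (hlast : ∀ h : 0 < ℓ, P (a ⟨ℓ - 1, Nat.sub_lt h Nat.one_pos⟩) ∈ U₁) :
    ∀ t : ℕ, 1 ≤ t → t ≤ ℓ →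
      (Module.finrank F (fixSubmodule P Q) : ℤ)
        ≤ (n : ℤ) ^ 2 * m - ((t : ℤ) - 1) * ((n : ℤ) - t) * m := by
  classical
  intro t ht1 htl
  set b := Module.Basis.sumExtend hind with hbdef
  haveI : Fintype (Fin ℓ ⊕ Module.Basis.sumExtendIndex hind) := FiniteDimensional.fintypeBasisIndex b
  have hcard : Fintype.card (Fin ℓ ⊕ Module.Basis.sumExtendIndex hind) = n := by
    have := Module.finrank_eq_card_basis b
    simpa using this.symm
  have hsub : ∀ i : Fin (t - 1), i.1 + 1 < ℓ := by
    intro i; have := i.isLt; omega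
  have hinjl : Function.Injective
      (fun i : Fin (t - 1) => (Sum.inl ⟨i.1 + 1, hsub i⟩ : Fin ℓ ⊕ Module.Basis.sumExtendIndex hind)) := by
    intro x y hxy
    simp only [Sum.inl.injEq, Fin.mk.injEq, add_left_inj] at hxy
    exact Fin.ext hxy
  set T : Finset (Fin ℓ ⊕ Module.Basis.sumExtendIndex hind) :=
    Finset.image (fun i : Fin (t - 1) =>
      (Sum.inl ⟨i.1 + 1, hsub i⟩ : Fin ℓ ⊕ Module.Basis.sumExtendIndex hind)) Finset.univ with hTdef
  have hTcard : T.card = t - 1 := by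
    rw [hTdef, Finset.card_image_of_injective _ hinjl, Finset.card_univ, Fintype.card_fin]
  set E : fixSubmodule P Q →ₗ[F]
      ((↥(Tᶜ) × (Fin ℓ ⊕ Module.Basis.sumExtendIndex hind)) → (Fin m → F)) :=
    { toFun := fun φ p => φ.1 (b p.1.1 ⊗ₜ[F] b p.2)
      map_add' := fun x y => rfl
      map_smul' := fun c x => rfl } with hEdef
  have hker : ∀ φ : fixSubmodule P Q, E φ = 0 → φ = 0 := by
    intro φ hφ
    have hφ' : ∀ j ∉ T, ∀ k, φ.1 (b j ⊗ₜ[F] b k) = 0 := by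
      intro j hj k
      have := congrFun hφ (⟨j, Finset.mem_compl.2 hj⟩, k)
      simpa [hEdef] using this
    have hstep : ∀ j, (∀ k, φ.1 (b j ⊗ₜ[F] b k) = 0) →
        ∀ v, φ.1 (b j ⊗ₜ[F] v) = 0 := by
      intro j hj v
      have h0 : (φ.1 ∘ₗ (TensorProduct.mk F (Fin n → F) (Fin n → F) (b j))) = 0 :=
        b.ext (fun k => by simpa using hj k)
      simpa using LinearMap.congr_fun h0 v
    have key : ∀ k : ℕ, k < t → ∀ hk : k < ℓ, ∀ v, φ.1 (a ⟨k, hk⟩ ⊗ₜ[F] v) = 0 := by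
      intro k
      induction k with
      | zero =>
        intro _ hk v
        have h0 : (Sum.inl (⟨0, hk⟩ : Fin ℓ) : Fin ℓ ⊕ Module.Basis.sumExtendIndex hind) ∉ T := by
          simp [hTdef]
        rw [← sumExtend_inl hind ⟨0, hk⟩]
        exact hstep _ (hφ' _ h0) v
      | succ k ih =>
        intro hkt hk v
        have hk' : k < ℓ := by omega
        have hc := hchain ⟨k, hk'⟩ hk
        have h1 : φ.1 (a ⟨k + 1, hk⟩ ⊗ₜ[F] v)
            = φ.1 (P (a ⟨k, hk'⟩) ⊗ₜ[F] P (P.symm v)) := by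
          rw [hc, P.apply_symm_apply]
        rw [h1, φ.2 (a ⟨k, hk'⟩) (P.symm v), ih (by omega) hk' _]
        simp
    have hall : ∀ j k, φ.1 (b j ⊗ₜ[F] b k) = 0 := by
      intro j k
      by_cases hj : j ∈ T
      · rw [hTdef] at hj
        obtain ⟨i, -, hi⟩ := Finset.mem_image.mp hj
        rw [← hi, sumExtend_inl hind]
        exact key (i.1 + 1) (by have := i.isLt; omega) (hsub i) (b k)
      · exact hφ' j hj k
    have : φ.1 = 0 := by
      apply (b.tensorProduct b).ext
      intro p
      simpa [Module.Basis.tensorProduct_apply'] using hall p.1 p.2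
    exact Subtype.ext this
  have hinj : Function.Injective E :=
    fun x y hxy => sub_eq_zero.mp (hker _ (by rw [map_sub, hxy, sub_self]))
  have hfin : Module.finrank F (fixSubmodule P Q)
      ≤ Module.finrank F ((↥(Tᶜ) × (Fin ℓ ⊕ Module.Basis.sumExtendIndex hind)) → (Fin m → F)) :=
    LinearMap.finrank_le_finrank_of_injective hinj
  have hW : Module.finrank F ((↥(Tᶜ) × (Fin ℓ ⊕ Module.Basis.sumExtendIndex hind)) → (Fin m → F))
      = (n - (t - 1)) * n * m := by
    rw [Module.finrank_pi_fintype]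
    simp [Finset.card_univ, Fintype.card_prod, Fintype.card_coe, Finset.card_compl,
      hTcard, hcard, mul_assoc]
  have hTn : t - 1 ≤ n := by
    calc t - 1 = T.card := hTcard.symm
    _ ≤ Fintype.card (Fin ℓ ⊕ Module.Basis.sumExtendIndex hind) := Finset.card_le_univ T
    _ = n := hcard
  have hfin2 : (Module.finrank F (fixSubmodule P Q) : ℤ)
      ≤ ((n : ℤ) - ((t : ℤ) - 1)) * n * m := by
    have h' : (Module.finrank F (fixSubmodule P Q) : ℤ) ≤ ((n - (t - 1) : ℕ) : ℤ) * n * m := by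
      exact_mod_cast hfin.trans_eq hW
    rwa [Nat.cast_sub hTn, Nat.cast_sub ht1] at h'
  refine hfin2.trans ?_
  have hm : (0 : ℤ) ≤ (m : ℤ) := Int.ofNat_nonneg m
  have htz : (1 : ℤ) ≤ (t : ℤ) := by exact_mod_cast ht1
  nlinarith [mul_nonneg (mul_nonneg (by linarith : (0:ℤ) ≤ (t:ℤ) - 1)
    (by linarith : (0:ℤ) ≤ (t:ℤ))) hm]
end

section
/- Let F be a finite field, n, m ∈ ℕ, and let P : F^n → F^n and Q : F^m → F^m be invertible F-linear maps. Suppose F^m = X₁ ⊕ X₂ where X₂ is Q-invariant, and X₁ has an ordered basis (b₁, …, b_ℓ) such that Q(b_k) = b_{k+1} for all 1 ≤ k < ℓ and Q(b_ℓ) ∈ X₁. Then the dimension of Fix(P,Q) is at most n²m − n²(ℓ−1). -/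
open TensorProduct

set_option maxHeartbeats 1000000 in
set_option synthInstance.maxHeartbeats 400000 in
/-- if `F^m = X₁ ⊕ X₂` with `X₂` a `Q`-invariant subspace and `X₁` spanned by a
chain `b₁, …, b_ℓ` with `Q b_k = b_{k+1}` for `k < ℓ` and `Q b_ℓ ∈ X₁`, then
`dim Fix(P,Q) ≤ n²m − n²(ℓ−1)`. -/
theorem stmt_12 (F : Type) [Field F] [Fintype F] (n m ℓ : ℕ)
    (P : (Fin n → F) ≃ₗ[F] (Fin n → F)) (Q : (Fin m → F) ≃ₗ[F] (Fin m → F))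
    (X₁ X₂ : Submodule F (Fin m → F)) (hcompl : IsCompl X₁ X₂)
    (hX₂ : ∀ x ∈ X₂, Q x ∈ X₂)
    (b : Fin ℓ → (Fin m → F)) (hind : LinearIndependent F b)
    (hspan : Submodule.span F (Set.range b) = X₁)
    (hchain : ∀ k : Fin ℓ, ∀ h : k.1 + 1 < ℓ, Q (b k) = b ⟨k.1 + 1, h⟩)
    (hlast : ∀ h : 0 < ℓ, Q (b ⟨ℓ - 1, Nat.sub_lt h Nat.one_pos⟩) ∈ X₁) :
    (Module.finrank F (fixSubmodule P Q) : ℤ)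
      ≤ (n : ℤ) ^ 2 * m - (n : ℤ) ^ 2 * ((ℓ : ℤ) - 1) := by
  classical
  have hfull : Module.finrank F ((Fin n → F) ⊗[F] (Fin n → F) →ₗ[F] (Fin m → F))
      = n * n * m := by
    rw [Module.finrank_linearMap, Module.finrank_tensorProduct,
      Module.finrank_fin_fun, Module.finrank_fin_fun]
  rcases Nat.eq_zero_or_pos ℓ with hℓ0 | hℓpos
  · subst hℓ0
    have h1 : Module.finrank F (fixSubmodule P Q)
        ≤ Module.finrank F ((Fin n → F) ⊗[F] (Fin n → F) →ₗ[F] (Fin m → F)) :=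
      Submodule.finrank_le _
    rw [hfull] at h1
    have h2 : (Module.finrank F (fixSubmodule P Q) : ℤ) ≤ (n : ℤ) * n * m := by
      exact_mod_cast h1
    push_cast
    nlinarith [h2]
  -- main case : ℓ ≥ 1
  have hbmem : ∀ k, b k ∈ X₁ := fun k =>
    hspan ▸ Submodule.subset_span (Set.mem_range_self k)
  obtain ⟨B, hB⟩ : ∃ B : Module.Basis (Fin ℓ) F X₁, ∀ k, (B k : Fin m → F) = b k :=
    ⟨(Module.Basis.span hind).map (LinearEquiv.ofEq _ _ hspan),
      fun k => by simp [Module.Basis.span_apply]⟩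
  have hX1rank : Module.finrank F X₁ = ℓ := by
    rw [Module.finrank_eq_card_basis B, Fintype.card_fin]
  have hℓm : ℓ ≤ m := by
    have h2 : Module.finrank F X₁ ≤ Module.finrank F (Fin m → F) :=
      Submodule.finrank_le _
    rw [hX1rank, Module.finrank_fin_fun] at h2
    exact h2
  set lst : Fin ℓ := ⟨ℓ - 1, Nat.sub_lt hℓpos Nat.one_pos⟩ with hlstdef
  -- Q maps X₁ into X₁
  have hQb : ∀ k : Fin ℓ, Q (b k) ∈ X₁ := by
    intro k
    by_cases hk : k.1 + 1 < ℓ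
    · rw [hchain k hk]; exact hbmem _
    · have : k = lst := by
        apply Fin.ext
        simp only [hlstdef]
        omega
      rw [this]
      exact hlast hℓpos
  have hQX₁ : ∀ x ∈ X₁, Q x ∈ X₁ := by
    intro x hx
    rw [← hspan] at hx
    induction hx using Submodule.span_induction with
    | mem x hx => obtain ⟨k, rfl⟩ := hx; exact hQb k
    | zero => simp
    | add x y _ _ hx hy => rw [map_add]; exact X₁.add_mem hx hy
    | smul c x _ hx => rw [map_smul]; exact X₁.smul_mem c hx
  obtain ⟨QX, hQXap⟩ : ∃ QX : X₁ →ₗ[F] X₁, ∀ x : X₁, (QX x : Fin m → F) = Q x :=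
    ⟨(Q : (Fin m → F) →ₗ[F] (Fin m → F)).restrict hQX₁,
      fun x => by simp [LinearMap.restrict_apply]⟩
  -- the tensor square of P
  obtain ⟨PP, hPPap⟩ : ∃ PP : ((Fin n → F) ⊗[F] (Fin n → F)) ≃ₗ[F]
      ((Fin n → F) ⊗[F] (Fin n → F)),
      ∀ v w : Fin n → F, PP (v ⊗ₜ[F] w) = P v ⊗ₜ[F] P w :=
    ⟨TensorProduct.congr P P, fun v w => by simp⟩
  have hfix : ∀ φ ∈ fixSubmodule P Q, ∀ t, φ (PP t) = Q (φ t) := by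
    intro φ hφ t
    induction t using TensorProduct.induction_on with
    | zero => simp
    | tmul v w => rw [hPPap]; exact hφ v w
    | add x y hx hy => rw [map_add, map_add, hx, hy, ← map_add, ← map_add]
  -- the last-coordinate functional
  obtain ⟨cl, hcl⟩ : ∃ cl : (Fin m → F) →ₗ[F] F, ∀ x : X₁, cl x = B.coord lst x :=
    ⟨(B.coord lst) ∘ₗ (X₁.projectionOnto X₂ hcompl),
      fun x => by simp [Submodule.projectionOnto_apply_left hcompl]⟩
  -- the embedding
  set T : (fixSubmodule P Q) →ₗ[F]
      (((Fin n → F) ⊗[F] (Fin n → F)) →ₗ[F] ((Fin m → F) ⧸ X₁))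
        × (((Fin n → F) ⊗[F] (Fin n → F)) →ₗ[F] F) :=
    { toFun := fun φ => (X₁.mkQ ∘ₗ φ.1, cl ∘ₗ φ.1)
      map_add' := by intro x y; ext t <;> simp
      map_smul' := by intro c x; ext t <;> simp } with hTdef
  have hTinj : Function.Injective T := by
    rw [injective_iff_map_eq_zero]
    intro φ hTφ
    rw [hTdef] at hTφ
    simp only [LinearMap.coe_mk, AddHom.coe_mk, Prod.mk_eq_zero] at hTφ
    obtain ⟨h1, h2⟩ := hTφ
    have hmem : ∀ t, φ.1 t ∈ X₁ := by
      intro t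
      have := LinearMap.congr_fun h1 t
      simpa [Submodule.Quotient.mk_eq_zero] using this
    obtain ⟨ψ, hψap⟩ : ∃ ψ : ((Fin n → F) ⊗[F] (Fin n → F)) →ₗ[F] X₁,
        ∀ t, (ψ t : Fin m → F) = φ.1 t :=
      ⟨LinearMap.codRestrict X₁ φ.1 hmem, fun t => rfl⟩
    have hclast : ∀ t, B.repr (ψ t) lst = 0 := by
      intro t
      have h := LinearMap.congr_fun h2 t
      rw [LinearMap.comp_apply] at h
      rw [← hψap t, hcl (ψ t)] at h
      exact h
    -- relation ψ (PP t) = QX (ψ t)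
    have hrel : ∀ t, ψ (PP t) = QX (ψ t) := by
      intro t
      apply Subtype.ext
      rw [hψap, hQXap, hψap]
      exact hfix φ.1 φ.2 t
    -- expanding in coordinates
    have hQXB : ∀ k : Fin ℓ, ∀ h : k.1 + 1 < ℓ, QX (B k) = B ⟨k.1 + 1, h⟩ := by
      intro k h
      apply Subtype.ext
      rw [hB, hQXap, hB, hchain k h]
    have hstep : ∀ j : Fin ℓ, (∀ k : Fin ℓ, k.1 + 1 = j.1 → ∀ t, B.repr (ψ t) k = 0) →
        ∀ t, B.repr (ψ t) j = 0 := by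
      intro j hj t
      have ht : t = PP (PP.symm t) := (PP.apply_symm_apply t).symm
      rw [ht]
      set s := PP.symm t with hsdef
      show B.repr (ψ (PP s)) j = 0
      rw [hrel s]
      have hsum : QX (ψ s) = ∑ i : Fin ℓ, B.repr (ψ s) i • QX (B i) := by
        conv_lhs => rw [← B.sum_repr (ψ s)]
        rw [map_sum]
        simp
      rw [hsum, map_sum, Finsupp.coe_finset_sum, Finset.sum_apply]
      apply Finset.sum_eq_zero
      intro i _
      rw [map_smul, Finsupp.smul_apply, smul_eq_mul]
      by_cases hi : i.1 + 1 < ℓ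
      · rw [hQXB i hi, B.repr_self]
        by_cases hij : (⟨i.1 + 1, hi⟩ : Fin ℓ) = j
        · have hci : ∀ t', B.repr (ψ t') i = 0 := hj i (by rw [← hij])
          rw [hci s, zero_mul]
        · rw [Finsupp.single_apply, if_neg hij, mul_zero]
      · have hilst : i = lst := by apply Fin.ext; simp only [hlstdef]; omega
        rw [hilst, hclast s, zero_mul]
    have haux : ∀ N, ∀ j : Fin ℓ, j.1 ≤ N → ∀ t, B.repr (ψ t) j = 0 := by
      intro N
      induction N with
      | zero =>
        intro j hj t
        exact hstep j (fun k hk _ => absurd hk (by omega)) t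
      | succ N ih =>
        intro j hj t
        exact hstep j (fun k hk t' => ih k (by omega) t') t
    have hall : ∀ j : Fin ℓ, ∀ t, B.repr (ψ t) j = 0 := fun j => haux j.1 j le_rfl
    -- conclude φ = 0
    apply Subtype.ext
    apply LinearMap.ext
    intro t
    have hψ0 : ψ t = 0 := by
      have hr0 : B.repr (ψ t) = 0 := by
        ext j
        exact hall j t
      simpa using B.repr.map_eq_zero_iff.mp hr0
    rw [← hψap t, hψ0]
    simp
  -- dimension count
  haveI : Module.Finite F ((Fin n → F) ⊗[F] (Fin n → F)) :=
    Module.Finite.tensorProduct F _ _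
  haveI : Module.Finite F ((Fin n → F) ⊗[F] (Fin n → F) →ₗ[F] ((Fin m → F) ⧸ X₁)) :=
    Module.Finite.linearMap _ _ _ _
  haveI : Module.Finite F ((Fin n → F) ⊗[F] (Fin n → F) →ₗ[F] F) :=
    Module.Finite.linearMap _ _ _ _
  have hdim : Module.finrank F (fixSubmodule P Q) ≤ n * n * (m - ℓ) + n * n := by
    have h1 := LinearMap.finrank_le_finrank_of_injective hTinj
    have h2 : Module.finrank F
        ((((Fin n → F) ⊗[F] (Fin n → F)) →ₗ[F] ((Fin m → F) ⧸ X₁))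
          × (((Fin n → F) ⊗[F] (Fin n → F)) →ₗ[F] F)) = n * n * (m - ℓ) + n * n := by
      rw [Module.finrank_prod, Module.finrank_linearMap, Module.finrank_linearMap,
        Module.finrank_tensorProduct, Module.finrank_fin_fun, Module.finrank_self]
      have hq : Module.finrank F ((Fin m → F) ⧸ X₁) = m - ℓ := by
        have h3 := Submodule.finrank_quotient_add_finrank X₁
        rw [hX1rank, Module.finrank_fin_fun] at h3
        omega
      rw [hq, mul_one]
    rw [h2] at h1
    exact h1
  have hZ : (Module.finrank F (fixSubmodule P Q) : ℤ) ≤ (n : ℤ) * n * ((m : ℤ) - ℓ) + n * n := by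
    zify [hℓm] at hdim
    exact hdim
  have heq : (n : ℤ) * n * ((m : ℤ) - ℓ) + n * n
      = (n : ℤ) ^ 2 * m - (n : ℤ) ^ 2 * ((ℓ : ℤ) - 1) := by ring
  linarith [hZ]
end

section
/- Let F be a finite field, n, m, E ∈ ℕ, and let P : F^n → F^n and Q : F^m → F^m be invertible F-linear maps. Suppose F^n = U₁ ⊕ ⋯ ⊕ U_E ⊕ U′ where each U_i and U′ is P-invariant, and for each i ∈ {1,…,E} the subspace U_i has an ordered basis (a^{(i)}_1, …, a^{(i)}_{s_i}) with s_i ≥ 2 and P(a^{(i)}_j) = a^{(i)}_{j+1} for all 1 ≤ j < s_i. Let ℓ₀ = s_1 + ⋯ + s_E. Then the dimension of Fix(P,Q) is at most n²m − E·(n−ℓ₀)·m. -/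
open TensorProduct
open scoped DirectSum

set_option maxHeartbeats 1000000 in
/-- if `F^n = U₁ ⊕ ⋯ ⊕ U_E ⊕ U′` with every summand `P`-invariant and each `U_i`
spanned by a chain of length `s_i ≥ 2` under `P`, then with `ℓ₀ = s_1 + ⋯ + s_E`,
`dim Fix(P,Q) ≤ n²m − E·(n−ℓ₀)·m`. -/
theorem stmt_13 (F : Type) [Field F] [Fintype F] (n m E : ℕ)
    (P : (Fin n → F) ≃ₗ[F] (Fin n → F)) (Q : (Fin m → F) ≃ₗ[F] (Fin m → F))
    (U : Fin E → Submodule F (Fin n → F)) (U' : Submodule F (Fin n → F))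
    (hindep : iSupIndep (Sum.elim U (fun _ : Unit => U')))
    (hsup : (⨆ i, Sum.elim U (fun _ : Unit => U') i) = ⊤)
    (hU : ∀ i : Fin E, ∀ x ∈ U i, P x ∈ U i)
    (hU' : ∀ x ∈ U', P x ∈ U')
    (s : Fin E → ℕ) (hs : ∀ i, 2 ≤ s i)
    (a : (i : Fin E) → Fin (s i) → (Fin n → F))
    (hind : ∀ i, LinearIndependent F (a i))
    (hspan : ∀ i, Submodule.span F (Set.range (a i)) = U i)
    (hchain : ∀ i : Fin E, ∀ j : Fin (s i), ∀ h : j.1 + 1 < s i, P (a i j) = a i ⟨j.1 + 1, h⟩) :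
    (Module.finrank F (fixSubmodule P Q) : ℤ)
      ≤ (n : ℤ) ^ 2 * m - (E : ℤ) * ((n : ℤ) - ∑ i, (s i : ℤ)) * m := by
    classical
  set S : Fin E ⊕ Unit → Submodule F (Fin n → F) := Sum.elim U (fun _ => U') with hSdef
  have hInternal : DirectSum.IsInternal S :=
    (DirectSum.isInternal_submodule_iff_iSupIndep_and_iSup_eq_top S).mpr ⟨hindep, hsup⟩
  set e : (⨁ k, S k) ≃ₗ[F] (Fin n → F) :=
    LinearEquiv.ofBijective (DirectSum.coeLinearMap S) hInternal with he
  -- projections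
  set π : ∀ k, (Fin n → F) →ₗ[F] S k :=
    fun k => (DirectSum.component F _ (fun k => S k) k).comp e.symm.toLinearMap with hπdef
  have hπ_self : ∀ k (x : (Fin n → F)) (hx : x ∈ S k), π k x = ⟨x, hx⟩ := by
    intro k x hx
    exact hInternal.ofBijective_coeLinearMap_of_mem hx
  have hπ_ne : ∀ {j k}, j ≠ k → ∀ (x : (Fin n → F)), x ∈ S j → π k x = 0 := by
    intro j k hjk x hx
    exact hInternal.ofBijective_coeLinearMap_of_mem_ne hjk hx
  -- bases of the U i
  set bU : ∀ i, Module.Basis (Fin (s i)) F (U i) :=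
    fun i => (Module.Basis.span (hind i)).map (LinearEquiv.ofEq _ _ (hspan i)) with hbUdef
  have hbU : ∀ i j, (bU i j : (Fin n → F)) = a i j := by
    intro i j
    simp [hbUdef, Module.Basis.span_apply]
  -- index gadgets
  have h0 : ∀ i : Fin E, (0 : ℕ) < s i := fun i => lt_of_lt_of_le (by norm_num) (hs i)
  have h1 : ∀ i : Fin E, (1 : ℕ) < s i := fun i => lt_of_lt_of_le (by norm_num) (hs i)
  set j0 : ∀ i : Fin E, Fin (s i) := fun i => ⟨0, h0 i⟩ with hj0
  set j1 : ∀ i : Fin E, Fin (s i) := fun i => ⟨1, h1 i⟩ with hj1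
  have hPa : ∀ i, P (a i (j0 i)) = a i (j1 i) := by
    intro i
    exact hchain i (j0 i) (h1 i)
  -- the constraint map Ψ
  set g1 : ∀ i : Fin E, (U' →ₗ[F] ((Fin n → F) ⊗[F] (Fin n → F))) :=
    fun i => (TensorProduct.mk F (Fin n → F) (Fin n → F) (a i (j1 i))).comp U'.subtype with hg1
  set g0 : ∀ i : Fin E, (U' →ₗ[F] ((Fin n → F) ⊗[F] (Fin n → F))) :=
    fun i => (TensorProduct.mk F (Fin n → F) (Fin n → F) (a i (j0 i))).comp
      (P.symm.toLinearMap.comp U'.subtype) with hg0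
  set Ψi : ∀ i : Fin E, (((Fin n → F) ⊗[F] (Fin n → F) →ₗ[F] (Fin m → F)) →ₗ[F] (U' →ₗ[F] (Fin m → F))) :=
    fun i => LinearMap.lcomp F (Fin m → F) (g1 i)
      - (LinearMap.llcomp F U' (Fin m → F) (Fin m → F) Q.toLinearMap).comp (LinearMap.lcomp F (Fin m → F) (g0 i)) with hΨi
  set Ψ : ((Fin n → F) ⊗[F] (Fin n → F) →ₗ[F] (Fin m → F)) →ₗ[F] (Fin E → (U' →ₗ[F] (Fin m → F))) := LinearMap.pi Ψi with hΨ
  have hΨapply : ∀ (φ : (Fin n → F) ⊗[F] (Fin n → F) →ₗ[F] (Fin m → F)) (i : Fin E) (u : U'),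
      Ψ φ i u = φ (a i (j1 i) ⊗ₜ[F] (u : (Fin n → F))) - Q (φ (a i (j0 i) ⊗ₜ[F] P.symm (u : (Fin n → F)))) := by
    intro φ i u
    rfl
  -- Fix ⊆ ker Ψ
  have hker : fixSubmodule P Q ≤ LinearMap.ker Ψ := by
    intro φ hφ
    rw [LinearMap.mem_ker]
    ext i u
    have hfix : ∀ v₁ v₂ : (Fin n → F), φ (P v₁ ⊗ₜ[F] P v₂) = Q (φ (v₁ ⊗ₜ[F] v₂)) := hφ
    have := hfix (a i (j0 i)) (P.symm (u : (Fin n → F)))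
    rw [hPa i, P.apply_symm_apply] at this
    simp [hΨapply, this]
  -- surjectivity of Ψ
  set f : ∀ i : Fin E, ((Fin n → F) →ₗ[F] F) :=
    fun i => ((bU i).coord (j1 i)).comp (π (Sum.inl i)) with hfdef
  have haU : ∀ i j, a i j ∈ U i := by
    intro i j
    rw [← hspan i]
    exact Submodule.subset_span ⟨j, rfl⟩
  have hf_same : ∀ i jj, f i (a i jj) = if jj = j1 i then 1 else 0 := by
    intro i jj
    have : π (Sum.inl i) (a i jj) = ⟨a i jj, haU i jj⟩ := hπ_self (Sum.inl i) _ (haU i jj)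
    have hb : (⟨a i jj, haU i jj⟩ : U i) = bU i jj := by
      apply Subtype.ext
      simp [hbU]
    show ((bU i).coord (j1 i)) (π (Sum.inl i) (a i jj)) = _
    rw [this]; erw [hb]; rw [Module.Basis.coord_apply, Module.Basis.repr_self]
    by_cases h : jj = j1 i <;> simp [h, Finsupp.single_apply]
  have hf_ne : ∀ i k jj, i ≠ k → f k (a i jj) = 0 := by
    intro i k jj hik
    have : π (Sum.inl k) (a i jj) = 0 :=
      hπ_ne (by simpa using hik) _ (show a i jj ∈ S (Sum.inl i) from haU i jj)
    show ((bU k).coord (j1 k)) (π (Sum.inl k) (a i jj)) = 0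
    rw [this]; exact map_zero _
  have hπ'_self : ∀ u : U', π (Sum.inr ()) (u : (Fin n → F)) = u := by
    intro u
    exact hπ_self (Sum.inr ()) (u : (Fin n → F)) u.2
  have hsurj : Function.Surjective Ψ := by
    intro g
    refine ⟨TensorProduct.lift (∑ k, (f k).smulRight ((g k).comp (π (Sum.inr ())))), ?_⟩
    funext i
    apply LinearMap.ext
    intro u
    rw [hΨapply]
    have hlift : ∀ (x y : (Fin n → F)),
        TensorProduct.lift (∑ k, (f k).smulRight ((g k).comp (π (Sum.inr ())))) (x ⊗ₜ[F] y)
          = ∑ k, f k x • (g k (π (Sum.inr ()) y)) := by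
      intro x y
      rw [TensorProduct.lift.tmul]
      simp only [LinearMap.sum_apply, LinearMap.smulRight_apply, LinearMap.coe_comp,
        Function.comp_apply, LinearMap.smul_apply]
      rfl
    rw [hlift, hlift]
    have hzero : ∀ k, f k (a i (j0 i)) = 0 := by
      intro k
      by_cases hik : i = k
      · subst hik
        rw [hf_same]
        have : ¬ (j0 i = j1 i) := by
          simp [hj0, hj1, Fin.ext_iff]
        simp [this]
      · exact hf_ne i k _ hik
    have hone : ∀ k, f k (a i (j1 i)) = if k = i then 1 else 0 := by
      intro k
      by_cases hik : k = i
      · subst hik; rw [hf_same]; simp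
      · rw [hf_ne i k _ (fun h => hik h.symm)]
        simp [hik]
    simp only [hzero, zero_smul, Finset.sum_const_zero, map_zero, sub_zero, hone,
      ite_smul, one_smul, Finset.sum_ite_eq', Finset.mem_univ, if_true, hπ'_self u]
  -- dimension bookkeeping
  have hrankU : ∀ i, Module.finrank F (U i) = s i := by
    intro i
    rw [← hspan i]
    simpa using finrank_span_eq_card (hind i)
  have hn : Module.finrank F (Fin n → F) = n := by simp
  have hsumrank : (∑ i, s i) + Module.finrank F U' = n := by
    have h2 := e.finrank_eq
    rw [Module.finrank_directSum, Fintype.sum_sum_type, hn] at h2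
    have hl : ∀ i : Fin E, Module.finrank F (S (Sum.inl i)) = s i := fun i => hrankU i
    have hr : ∀ u : Unit, Module.finrank F (S (Sum.inr u)) = Module.finrank F U' :=
      fun _ => rfl
    simp only [hl, hr] at h2
    simpa using h2
  have hcod : Module.finrank F (Fin E → (U' →ₗ[F] (Fin m → F)))
      = E * (Module.finrank F U' * m) := by
    rw [Module.finrank_pi_fintype]
    simp only [Module.finrank_linearMap, Module.finrank_pi, Fintype.card_fin,
      Finset.sum_const, Finset.card_univ, smul_eq_mul]
  have hdom : Module.finrank F ((Fin n → F) ⊗[F] (Fin n → F) →ₗ[F] (Fin m → F))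
      = n * n * m := by
    rw [Module.finrank_linearMap, Module.finrank_tensorProduct, hn]
    simp [mul_assoc]
  have hrange : LinearMap.range Ψ = ⊤ := LinearMap.range_eq_top.mpr hsurj
  have hrn := LinearMap.finrank_range_add_finrank_ker Ψ
  rw [hrange, finrank_top, hcod, hdom] at hrn
  have hle : Module.finrank F (fixSubmodule P Q) ≤ Module.finrank F (LinearMap.ker Ψ) :=
    Submodule.finrank_mono hker
  have h4 : ((∑ i, s i : ℕ) : ℤ) + (Module.finrank F U' : ℤ) = n := by exact_mod_cast hsumrank
  have h5 : (E : ℤ) * ((Module.finrank F U' : ℤ) * m)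
      + (Module.finrank F (LinearMap.ker Ψ) : ℤ) = (n : ℤ) * n * m := by exact_mod_cast hrn
  have h6 : (Module.finrank F (fixSubmodule P Q) : ℤ)
      ≤ (Module.finrank F (LinearMap.ker Ψ) : ℤ) := by exact_mod_cast hle
  have h7 : ((∑ i, s i : ℕ) : ℤ) = ∑ i, (s i : ℤ) := by push_cast; rfl
  have hd : (Module.finrank F U' : ℤ) = (n : ℤ) - ∑ i, (s i : ℤ) := by
    rw [← h7]; linarith
  rw [hd] at h5
  calc (Module.finrank F (fixSubmodule P Q) : ℤ)
      ≤ (Module.finrank F (LinearMap.ker Ψ) : ℤ) := h6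
    _ = (n : ℤ) ^ 2 * m - (E : ℤ) * ((n : ℤ) - ∑ i, (s i : ℤ)) * m := by
        linear_combination h5
end

section
/- Let F be a finite field, n, m, E ∈ ℕ, and let P : F^n → F^n and Q : F^m → F^m be invertible F-linear maps. Suppose F^m = X₁ ⊕ ⋯ ⊕ X_E ⊕ X′ where each X_i and X′ is Q-invariant, and for each i ∈ {1,…,E} the subspace X_i has an ordered basis (b^{(i)}_1, …, b^{(i)}_{s_i}) with s_i ≥ 2 and Q(b^{(i)}_j) = b^{(i)}_{j+1} for all 1 ≤ j < s_i. Then the dimension of Fix(P,Q) is at most n²m − n²·E. -/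
open TensorProduct DirectSum

/-- if `F^m = X₁ ⊕ ⋯ ⊕ X_E ⊕ X′` with every summand `Q`-invariant and each `X_i`
spanned by a chain of length `s_i ≥ 2` under `Q`, then `dim Fix(P,Q) ≤ n²m − n²·E`. -/
theorem stmt_14 (F : Type) [Field F] [Fintype F] (n m E : ℕ)
    (P : (Fin n → F) ≃ₗ[F] (Fin n → F)) (Q : (Fin m → F) ≃ₗ[F] (Fin m → F))
    (X : Fin E → Submodule F (Fin m → F)) (X' : Submodule F (Fin m → F))
    (hindep : iSupIndep (Sum.elim X (fun _ : Unit => X')))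
    (hsup : (⨆ i, Sum.elim X (fun _ : Unit => X') i) = ⊤)
    (hX : ∀ i : Fin E, ∀ x ∈ X i, Q x ∈ X i)
    (hX' : ∀ x ∈ X', Q x ∈ X')
    (s : Fin E → ℕ) (hs : ∀ i, 2 ≤ s i)
    (b : (i : Fin E) → Fin (s i) → (Fin m → F))
    (hind : ∀ i, LinearIndependent F (b i))
    (hspan : ∀ i, Submodule.span F (Set.range (b i)) = X i)
    (hchain : ∀ i : Fin E, ∀ j : Fin (s i), ∀ h : j.1 + 1 < s i, Q (b i j) = b i ⟨j.1 + 1, h⟩) :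
    (Module.finrank F (fixSubmodule P Q) : ℤ)
      ≤ (n : ℤ) ^ 2 * m - (n : ℤ) ^ 2 * E := by
  classical
  have hint : DirectSum.IsInternal (Sum.elim X fun _ : Unit => X') :=
    DirectSum.isInternal_submodule_of_iSupIndep_of_iSup_eq_top hindep hsup
  let ι' := Module.Basis.ofVectorSpaceIndex F X'
  haveI hft : Fintype ι' := inferInstance
  let α : Fin E ⊕ Unit → Type := fun c => match c with
    | .inl i => Fin (s i)
    | .inr _ => ι'
  let v : ∀ c, Module.Basis (α c) F ((Sum.elim X fun _ : Unit => X') c) := fun c =>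
    match c with
    | .inl i => (Module.Basis.span (hind i)).map (LinearEquiv.ofEq _ _ (hspan i))
    | .inr _ => Module.Basis.ofVectorSpace F X'
  let B : Module.Basis (Σ c, α c) F (Fin m → F) := hint.collectedBasis v
  have hB : ∀ (i : Fin E) (j : Fin (s i)), B ⟨.inl i, j⟩ = b i j := by
    intro i j
    simp [B, hint.collectedBasis_coe, v, Module.Basis.span_apply, Module.Basis.map_apply, LinearEquiv.coe_ofEq_apply]
    exact congrArg Subtype.val (Module.Basis.span_apply (hind i) j)
  -- dimension bookkeeping
  have hXrank : ∀ i, Module.finrank F (X i) = s i := by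
    intro i
    have h := Module.finrank_eq_card_basis (v (.inl i))
    exact h.trans (Fintype.card_fin _)
  have hm : m = (∑ i : Fin E, s i) + Module.finrank F X' := by
    have e : (Fin m → F) ≃ₗ[F] ⨁ c, (Sum.elim X fun _ : Unit => X') c :=
      (LinearEquiv.ofBijective (DirectSum.coeLinearMap _) hint).symm
    have h1 : Module.finrank F (Fin m → F)
        = ∑ c, Module.finrank F ((Sum.elim X fun _ : Unit => X') c) := by
      rw [e.finrank_eq, Module.finrank_directSum]
    simp only [Module.finrank_pi, Fintype.card_fin, Fintype.sum_sum_type,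
      Finset.univ_unique, Finset.sum_singleton] at h1
    refine h1.trans ?_
    congr 1
    exact Finset.sum_congr rfl (fun i _ => hXrank i)
  -- the chain action on the collected basis
  let top : ∀ i : Fin E, Fin (s i) := fun i => ⟨s i - 1, by have := hs i; omega⟩
  have hQB : ∀ (i : Fin E) (j : Fin (s i)) (h : (j : ℕ) + 1 < s i),
      Q (B ⟨.inl i, j⟩) = B ⟨.inl i, ⟨(j : ℕ) + 1, h⟩⟩ := by
    intro i j h
    rw [hB, hB]
    exact hchain i j h
  -- equality of sigma indices
  have hsig : ∀ (i₁ i₂ : Fin E) (j₁ : Fin (s i₁)) (j₂ : Fin (s i₂)),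
      ((⟨.inl i₁, j₁⟩ : Σ c, α c) = ⟨.inl i₂, j₂⟩) ↔ (i₁ = i₂ ∧ (j₁ : ℕ) = (j₂ : ℕ)) := by
    intro i₁ i₂ j₁ j₂
    constructor
    · intro h
      obtain ⟨h1, h2⟩ := Sigma.mk.inj_iff.mp h
      obtain rfl : i₁ = i₂ := Sum.inl.inj h1
      exact ⟨rfl, congrArg Fin.val (eq_of_heq h2)⟩
    · rintro ⟨rfl, h⟩
      rw [Fin.ext h]
  -- key shift computation
  have key : ∀ (x : Fin m → F),
      (∀ i, B.repr x ⟨.inl i, top i⟩ = 0) →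
      (∀ j : ι', B.repr x ⟨.inr (), j⟩ = 0) →
      ∀ (i : Fin E) (j : Fin (s i)),
        B.repr (Q x) ⟨.inl i, j⟩ =
          if hj : (j : ℕ) = 0 then 0
          else B.repr x ⟨.inl i, ⟨(j : ℕ) - 1, Nat.lt_of_le_of_lt (Nat.sub_le _ _) j.2⟩⟩ := by
    intro x htop hx'
    have hxs : x ∈ Submodule.span F (B '' {a : Σ c, α c | ∃ (i : Fin E) (j : Fin (s i)),
        ∃ (h : (j : ℕ) + 1 < s i), a = ⟨.inl i, j⟩}) := by
      rw [Module.Basis.mem_span_image]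
      intro a ha
      have hne : B.repr x a ≠ 0 := Finsupp.mem_support_iff.mp ha
      rcases a with ⟨c, jj⟩
      cases c with
      | inr u =>
        cases u
        exact absurd (hx' jj) hne
      | inl i =>
        by_cases hlt : (jj : ℕ) + 1 < s i
        · exact ⟨i, jj, hlt, rfl⟩
        · have hj : jj = top i := Fin.ext (by have := jj.2; simp [top]; omega)
          rw [hj] at hne
          exact absurd (htop i) hne
    intro i j
    by_cases hj0 : (j : ℕ) = 0
    · rw [dif_pos hj0]
      have heq := LinearMap.eqOn_span
        (f := (B.coord ⟨.inl i, j⟩).comp (Q : (Fin m → F) →ₗ[F] (Fin m → F)))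
        (g := (0 : (Fin m → F) →ₗ[F] F)) ?_ hxs
      · simpa [Module.Basis.coord_apply] using heq
      · rintro y ⟨a, ⟨i', j', hj', rfl⟩, rfl⟩
        simp only [LinearMap.comp_apply, LinearMap.zero_apply, Module.Basis.coord_apply,
          LinearEquiv.coe_coe]
        rw [hQB i' j' hj', Module.Basis.repr_self, Finsupp.single_apply, if_neg]
        intro hEq
        have h2 := (hsig i' i ⟨(j' : ℕ) + 1, hj'⟩ j).mp hEq
        simp only [Fin.val_mk] at h2
        omega
    · rw [dif_neg hj0]
      have heq := LinearMap.eqOn_span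
        (f := (B.coord ⟨.inl i, j⟩).comp (Q : (Fin m → F) →ₗ[F] (Fin m → F)))
        (g := B.coord ⟨.inl i, ⟨(j : ℕ) - 1, Nat.lt_of_le_of_lt (Nat.sub_le _ _) j.2⟩⟩) ?_ hxs
      · simpa [Module.Basis.coord_apply] using heq
      · rintro y ⟨a, ⟨i', j', hj', rfl⟩, rfl⟩
        simp only [LinearMap.comp_apply, Module.Basis.coord_apply, LinearEquiv.coe_coe]
        rw [hQB i' j' hj', Module.Basis.repr_self, Module.Basis.repr_self,
          Finsupp.single_apply, Finsupp.single_apply]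
        have hc : ((⟨.inl i', ⟨(j' : ℕ) + 1, hj'⟩⟩ : Σ c, α c) = ⟨.inl i, j⟩)
            ↔ ((⟨.inl i', j'⟩ : Σ c, α c)
              = ⟨.inl i, ⟨(j : ℕ) - 1, Nat.lt_of_le_of_lt (Nat.sub_le _ _) j.2⟩⟩) := by
          rw [hsig, hsig]
          constructor <;> rintro ⟨rfl, h⟩ <;> exact ⟨rfl, by simp at h ⊢; omega⟩
        simp only [hc]
  -- the coordinate map
  let Kmap : (Fin m → F) →ₗ[F] (Fin E → F) × (ι' → F) :=
    LinearMap.prod (LinearMap.pi fun i => B.coord ⟨.inl i, top i⟩)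
      (LinearMap.pi fun j : ι' => B.coord ⟨.inr (), j⟩)
  let ρ : fixSubmodule P Q →ₗ[F] ((Fin n → F) ⊗[F] (Fin n → F) →ₗ[F] (Fin E → F) × (ι' → F)) :=
    (LinearMap.llcomp F ((Fin n → F) ⊗[F] (Fin n → F)) (Fin m → F) ((Fin E → F) × (ι' → F)) Kmap).comp
      (fixSubmodule P Q).subtype
  have hker : ∀ φ : fixSubmodule P Q, ρ φ = 0 → φ = 0 := by
    intro φ hφ0
    have hcomp : Kmap.comp φ.1 = 0 := hφ0
    have hK0 : ∀ u, Kmap (φ.1 u) = 0 := by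
      intro u
      rw [← LinearMap.comp_apply, hcomp, LinearMap.zero_apply]
    have htopu : ∀ u (i : Fin E), B.repr (φ.1 u) ⟨.inl i, top i⟩ = 0 := by
      intro u i
      have h0 := congrFun (congrArg Prod.fst (hK0 u)) i
      simpa [Kmap, Module.Basis.coord_apply] using h0
    have hx'u : ∀ u (j : ι'), B.repr (φ.1 u) ⟨.inr (), j⟩ = 0 := by
      intro u j
      have h0 := congrFun (congrArg Prod.snd (hK0 u)) j
      simpa [Kmap, Module.Basis.coord_apply] using h0
    have hfix' : ∀ w₁ w₂ : Fin n → F,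
        φ.1 (w₁ ⊗ₜ[F] w₂) = Q (φ.1 (P.symm w₁ ⊗ₜ[F] P.symm w₂)) := by
      intro w₁ w₂
      have h := φ.2 (P.symm w₁) (P.symm w₂)
      rwa [P.apply_symm_apply, P.apply_symm_apply] at h
    have main : ∀ (t : ℕ) (i : Fin E) (j : Fin (s i)), (j : ℕ) ≤ t →
        ∀ w₁ w₂ : Fin n → F, B.repr (φ.1 (w₁ ⊗ₜ[F] w₂)) ⟨.inl i, j⟩ = 0 := by
      intro t
      induction t with
      | zero =>
        intro i j hj w₁ w₂
        rw [hfix' w₁ w₂, key _ (htopu _) (hx'u _) i j, dif_pos (Nat.le_zero.mp hj)]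
      | succ t ih =>
        intro i j hj w₁ w₂
        rw [hfix' w₁ w₂, key _ (htopu _) (hx'u _) i j]
        by_cases hj0 : (j : ℕ) = 0
        · rw [dif_pos hj0]
        · rw [dif_neg hj0]
          exact ih i ⟨(j : ℕ) - 1, Nat.lt_of_le_of_lt (Nat.sub_le _ _) j.2⟩ (by simp only [Fin.val_mk]; omega) _ _
    have hzero : ∀ w₁ w₂ : Fin n → F, φ.1 (w₁ ⊗ₜ[F] w₂) = 0 := by
      intro w₁ w₂
      rw [← (B.repr).map_eq_zero_iff]
      ext a
      rcases a with ⟨c, jj⟩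
      cases c with
      | inl i => simpa using main (jj : ℕ) i jj le_rfl w₁ w₂
      | inr u =>
        cases u
        simpa using hx'u (w₁ ⊗ₜ[F] w₂) jj
    have : φ.1 = 0 := TensorProduct.ext' (fun x y => by rw [hzero x y]; simp)
    exact Subtype.ext this
  have hinj : Function.Injective ρ := by
    intro φ ψ h
    rw [← sub_eq_zero]
    exact hker _ (by rw [map_sub, h, sub_self])
  haveI : Module.Finite F ((Fin n → F) ⊗[F] (Fin n → F) →ₗ[F] (Fin E → F) × (ι' → F)) := by infer_instance
  have hfin : Module.finrank F (fixSubmodule P Q)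
      ≤ Module.finrank F ((Fin n → F) ⊗[F] (Fin n → F) →ₗ[F] (Fin E → F) × (ι' → F)) :=
    LinearMap.finrank_le_finrank_of_injective hinj
  have hWrank : Module.finrank F ((Fin E → F) × (ι' → F)) = E + Module.finrank F X' := by
    have hcard : Module.finrank F X' = Fintype.card ι' :=
      Module.finrank_eq_card_basis (Module.Basis.ofVectorSpace F X')
    rw [Module.finrank_prod, Module.finrank_pi, Module.finrank_pi, Fintype.card_fin, hcard]
  have hHom : Module.finrank F ((Fin n → F) ⊗[F] (Fin n → F) →ₗ[F] (Fin E → F) × (ι' → F))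
      = (n * n) * (E + Module.finrank F X') := by
    rw [Module.finrank_linearMap, Module.finrank_tensorProduct, Module.finrank_pi,
      Fintype.card_fin, hWrank]
  rw [hHom] at hfin
  -- arithmetic
  have hsum : 2 * E ≤ ∑ i : Fin E, s i := by
    calc 2 * E = ∑ _i : Fin E, 2 := by simp [Finset.sum_const, mul_comm]
    _ ≤ ∑ i : Fin E, s i := Finset.sum_le_sum (fun i _ => hs i)
  have h2 : (E + Module.finrank F X') + E ≤ m := by omega
  have hcast : ((n * n) * (E + Module.finrank F X') : ℤ) ≤ (n : ℤ) ^ 2 * m - (n : ℤ) ^ 2 * E := by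
    have h2' : ((E : ℤ) + (Module.finrank F X' : ℤ)) + E ≤ (m : ℤ) := by exact_mod_cast h2
    nlinarith [sq_nonneg (n : ℤ)]
  calc (Module.finrank F (fixSubmodule P Q) : ℤ)
      ≤ ((n * n) * (E + Module.finrank F X') : ℤ) := by exact_mod_cast hfin
    _ ≤ (n : ℤ) ^ 2 * m - (n : ℤ) ^ 2 * E := hcast
end

section
/- Let F be a finite field, n, m, s, t, ℱ ∈ ℕ with ℱ ≤ s, and let P : F^n → F^n and Q : F^m → F^m be invertible F-linear maps. Suppose v₁, …, v_s ∈ F^n are linearly independent with P(v_i) = α_i v_i for scalars α_i ∈ F, w₁, …, w_t ∈ F^m are linearly independent with Q(w_k) = β_k w_k for scalars β_k ∈ F, and α₁, …, α_ℱ are pairwise distinct. Then the dimension of Fix(P,Q) is at most n²m − (ℱ−1)(s−ℱ)t. -/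
open TensorProduct

lemma exists_dual_family {F V ι : Type*} [Field F] [AddCommGroup V] [Module F V] [DecidableEq ι]
    {v : ι → V} (hv : LinearIndependent F v) :
    ∃ g : ι → (V →ₗ[F] F), ∀ i j, g i (v j) = if i = j then 1 else 0 := by
  classical
  have hs := (linearIndepOn_id_range_iff hv.injective).mpr hv
  have hmem : ∀ i, v i ∈ hs.extend (Set.subset_univ _) :=
    fun i => hs.subset_extend _ ⟨i, rfl⟩
  refine ⟨fun i => (Module.Basis.extend hs).coord ⟨v i, hmem i⟩, fun i j => ?_⟩
  have hbj : v j = Module.Basis.extend hs ⟨v j, hmem j⟩ :=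
    (Module.Basis.extend_apply_self hs ⟨v j, hmem j⟩).symm
  rw [hbj, Module.Basis.coord_apply, Module.Basis.repr_self, Finsupp.single_apply]
  by_cases h : i = j
  · subst h; simp
  · rw [if_neg, if_neg h]
    intro hc
    exact h (hv.injective (Subtype.ext_iff.mp hc).symm)

set_option maxHeartbeats 1000000 in
/-- if `P` has linearly independent eigenvectors `v₁, …, v_s` with eigenvalues
`α₁, …, α_s`, `Q` has linearly independent eigenvectors `w₁, …, w_t` with eigenvalues
`β₁, …, β_t`, and `α₁, …, α_ℱ` are pairwise distinct (`ℱ ≤ s`), then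
`dim Fix(P,Q) ≤ n²m − (ℱ−1)(s−ℱ)t`. -/
theorem stmt_15 (F : Type) [Field F] [Fintype F] (n m s t ℱ : ℕ) (hℱ : ℱ ≤ s)
    (P : (Fin n → F) ≃ₗ[F] (Fin n → F)) (Q : (Fin m → F) ≃ₗ[F] (Fin m → F))
    (v : Fin s → (Fin n → F)) (hv : LinearIndependent F v)
    (α : Fin s → F) (hα : ∀ i, P (v i) = α i • v i)
    (w : Fin t → (Fin m → F)) (hw : LinearIndependent F w)
    (β : Fin t → F) (hβ : ∀ k, Q (w k) = β k • w k)
    (hdist : ∀ i j : Fin s, i.1 < ℱ → j.1 < ℱ → i ≠ j → α i ≠ α j) :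
    (Module.finrank F (fixSubmodule P Q) : ℤ)
      ≤ (n : ℤ) ^ 2 * m - ((ℱ : ℤ) - 1) * ((s : ℤ) - ℱ) * t := by
  classical
  obtain ⟨g, hg⟩ := exists_dual_family hv
  obtain ⟨f, hf⟩ := exists_dual_family hw
  have hα0 : ∀ j, α j ≠ 0 := by
    intro j h0
    have h1 := hα j
    rw [h0, zero_smul] at h1
    have h2 : v j = 0 := by
      have := congrArg P.symm h1
      simpa using this
    exact hv.ne_zero j h2
  -- The operator Ψ
  set M : ((Fin n → F) ⊗[F] (Fin n → F)) →ₗ[F] ((Fin n → F) ⊗[F] (Fin n → F)) :=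
    TensorProduct.map P.toLinearMap P.toLinearMap with hM
  set Ψ : (((Fin n → F) ⊗[F] (Fin n → F)) →ₗ[F] (Fin m → F)) →ₗ[F]
      (((Fin n → F) ⊗[F] (Fin n → F)) →ₗ[F] (Fin m → F)) :=
    LinearMap.llcomp F _ _ _ Q.toLinearMap - LinearMap.lcomp F _ M with hΨdef
  have hΨ : ∀ (φ : ((Fin n → F) ⊗[F] (Fin n → F)) →ₗ[F] (Fin m → F)) x,
      Ψ φ x = Q (φ x) - φ (M x) := by
    intro φ x
    simp [hΨdef]
  have hker : fixSubmodule P Q = LinearMap.ker Ψ := by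
    ext φ
    have hmemfix : φ ∈ fixSubmodule P Q ↔
        ∀ v₁ v₂ : Fin n → F, φ (P v₁ ⊗ₜ[F] P v₂) = Q (φ (v₁ ⊗ₜ[F] v₂)) := Iff.rfl
    rw [hmemfix, LinearMap.mem_ker]
    constructor
    · intro h
      apply TensorProduct.ext'
      intro x y
      rw [hΨ]
      simp [hM, TensorProduct.map_tmul, h x y]
    · intro h v₁ v₂
      have h2 := LinearMap.congr_fun h (v₁ ⊗ₜ[F] v₂)
      rw [hΨ] at h2
      simp only [hM, TensorProduct.map_tmul, LinearEquiv.coe_coe, LinearMap.zero_apply] at h2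
      exact (sub_eq_zero.mp h2).symm
  have hexistsS : ∃ S : Finset (Fin s × Fin s × Fin t),
      (∀ p ∈ S, α p.1 * α p.2.1 ≠ β p.2.2) ∧
      (ℱ - 1) * ((s - ℱ) * t) ≤ S.card := by
    classical
    set B : Finset (Fin s) := Finset.univ.filter (fun i => i.1 < ℱ) with hBdef
    have hB : B.card = ℱ := by
      have : B = Finset.map ⟨Fin.castLE hℱ, Fin.castLE_injective hℱ⟩ Finset.univ := by
        ext a
        simp only [hBdef, Finset.mem_filter, Finset.mem_univ, true_and, Finset.mem_map,
          Function.Embedding.coeFn_mk]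
        constructor
        · intro h
          exact ⟨⟨a.1, h⟩, by ext; simp⟩
        · rintro ⟨b, rfl⟩
          simpa using b.2
      rw [this, Finset.card_map, Finset.card_univ, Fintype.card_fin]
    set A : Fin s → Fin t → Finset (Fin s) :=
      fun j k => B.filter (fun i => α i * α j ≠ β k) with hAdef
    have hAcard : ∀ j k, ℱ - 1 ≤ (A j k).card := by
      intro j k
      set C : Finset (Fin s) := B.filter (fun i => α i * α j = β k) with hCdef
      have hC1 : C.card ≤ 1 := by
        apply Finset.card_le_one.mpr
        intro a ha b hb
        simp only [hCdef, hBdef, Finset.mem_filter, Finset.mem_univ, true_and] at ha hb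
        by_contra hne
        exact hdist a b ha.1 hb.1 hne (mul_right_cancel₀ (hα0 j) (ha.2.trans hb.2.symm))
      have hAC : A j k = B \ C := by
        simp only [hAdef, hCdef]
        exact Finset.filter_not _ _
      rw [hAC, Finset.card_sdiff_of_subset (Finset.filter_subset _ _), hB, ← hCdef]
      omega
    set D : Finset (Fin s × Fin t) :=
      (Finset.univ.filter fun j : Fin s => ℱ ≤ j.1) ×ˢ Finset.univ with hDdef
    have hD : D.card = (s - ℱ) * t := by
      rw [hDdef, Finset.card_product, Finset.card_univ, Fintype.card_fin]
      congr 1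
      have : (Finset.univ.filter fun j : Fin s => ℱ ≤ j.1) = Finset.univ \ B := by
        rw [hBdef, ← Finset.filter_not]
        simp only [not_lt]
      rw [this, Finset.card_sdiff_of_subset (Finset.subset_univ _), hB, Finset.card_univ, Fintype.card_fin]
    refine ⟨D.biUnion (fun jk => (A jk.1 jk.2).image (fun i => (i, jk.1, jk.2))), ?_, ?_⟩
    · intro p hp
      rw [Finset.mem_biUnion] at hp
      obtain ⟨jk, _, hp⟩ := hp
      rw [Finset.mem_image] at hp
      obtain ⟨i, hi, rfl⟩ := hp
      simp only [hAdef, Finset.mem_filter] at hi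
      exact hi.2
    · rw [Finset.card_biUnion]
      · calc (ℱ - 1) * ((s - ℱ) * t) = D.card • (ℱ - 1) := by rw [hD, smul_eq_mul, mul_comm]
          _ ≤ ∑ jk ∈ D, ((A jk.1 jk.2).image (fun i => (i, jk.1, jk.2))).card := by
              apply Finset.card_nsmul_le_sum
              intro jk _
              rw [Finset.card_image_of_injective _ (fun a b h => (Prod.ext_iff.mp h).1)]
              exact hAcard _ _
      · intro x hx y hy hxy
        rw [Function.onFun, Finset.disjoint_left]
        intro p hpx hpy
        rw [Finset.mem_image] at hpx hpy
        obtain ⟨i, _, rfl⟩ := hpx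
        obtain ⟨i', _, he⟩ := hpy
        apply hxy
        have := (Prod.ext_iff.mp he).2
        exact Prod.ext (congrArg Prod.fst this).symm (congrArg Prod.snd this).symm
  obtain ⟨S, hSne, hScard⟩ := hexistsS
  -- the elements x p and the functional Φ
  set x : S → (((Fin n → F) ⊗[F] (Fin n → F)) →ₗ[F] (Fin m → F)) := fun p =>
    ((TensorProduct.lid F F).toLinearMap ∘ₗ
      TensorProduct.map (g p.1.1) (g p.1.2.1)).smulRight (w p.1.2.2) with hxdef
  have hx : ∀ (p : S) (a b : Fin n → F),
      x p (a ⊗ₜ[F] b) = (g p.1.1 a * g p.1.2.1 b) • w p.1.2.2 := by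
    intro p a b
    simp [hxdef, TensorProduct.lid_tmul, smul_smul]
  set Φ : (((Fin n → F) ⊗[F] (Fin n → F)) →ₗ[F] (Fin m → F)) →ₗ[F] (S → F) :=
    LinearMap.pi (fun q : S =>
      (f q.1.2.2) ∘ₗ (LinearMap.applyₗ (v q.1.1 ⊗ₜ[F] v q.1.2.1))) with hΦdef
  have hΦ : ∀ (φ) (q : S), Φ φ q = f q.1.2.2 (φ (v q.1.1 ⊗ₜ[F] v q.1.2.1)) := by
    intro φ q
    simp [hΦdef]
  have key : ∀ p : S, Φ (Ψ (x p)) =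
      Pi.single p (β p.1.2.2 - α p.1.1 * α p.1.2.1) := by
    intro p
    funext q
    rw [hΦ, hΨ]
    have hMe : M (v q.1.1 ⊗ₜ[F] v q.1.2.1)
        = (α q.1.1 • v q.1.1) ⊗ₜ[F] (α q.1.2.1 • v q.1.2.1) := by
      simp [hM, TensorProduct.map_tmul, hα]
    rw [hMe, hx, hx]
    rcases eq_or_ne q p with h0 | h0
    · subst h0
      simp only [map_sub, map_smul, hβ, hg, hf, smul_smul, Pi.single_apply, if_pos rfl,
        map_zero, Pi.sub_apply, Pi.smul_apply, smul_eq_mul, if_true]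
      ring
    · have hcomp : p.1.1 ≠ q.1.1 ∨ p.1.2.1 ≠ q.1.2.1 ∨ q.1.2.2 ≠ p.1.2.2 := by
        by_contra hc
        push_neg at hc
        exact h0 (Subtype.ext (Prod.ext hc.1.symm (Prod.ext hc.2.1.symm hc.2.2)))
      rw [Pi.single_apply, if_neg h0]
      rcases hcomp with h1 | h1 | h1
      · simp [map_sub, map_smul, hβ, hg, hf, smul_smul, if_neg h1]
      · simp [map_sub, map_smul, hβ, hg, hf, smul_smul, if_neg h1]
      · simp only [map_sub, map_smul, hβ, hg, hf, smul_smul]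
        split_ifs <;> simp [map_smul, hβ, hf, h1, smul_smul]
  -- linear independence of the images
  have hc : ∀ p : S, β p.1.2.2 - α p.1.1 * α p.1.2.1 ≠ 0 := by
    intro p
    exact sub_ne_zero.mpr (Ne.symm (hSne p.1 p.2))
  have hli : LinearIndependent F (fun p : S => Ψ (x p)) := by
    apply LinearIndependent.of_comp Φ
    have heq : (Φ ∘ fun p : S => Ψ (x p))
        = fun p : S => Pi.single p (β p.1.2.2 - α p.1.1 * α p.1.2.1) := by
      funext p
      exact key p
    rw [heq]
    have heq2 : (fun p : S => Pi.single p (β p.1.2.2 - α p.1.1 * α p.1.2.1))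
        = (fun p : S => Units.mk0 _ (hc p)) • (fun p : S => (Pi.single p 1 : S → F)) := by
      funext p
      simp only [Pi.smul_apply', Pi.smul_apply, Units.smul_mk0]
      rw [← Pi.single_smul]
      simp
    rw [heq2]
    apply LinearIndependent.units_smul
    have : (fun p : S => (Pi.single p 1 : S → F)) = ⇑(Pi.basisFun F S) := by
      funext p
      simp
    rw [this]
    exact (Pi.basisFun F S).linearIndependent
  -- rank bound
  have hspan := finrank_span_eq_card hli
  have hrange : Submodule.span F (Set.range fun p : S => Ψ (x p)) ≤ LinearMap.range Ψ := by
    rw [Submodule.span_le]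
    rintro _ ⟨p, rfl⟩
    exact ⟨x p, rfl⟩
  have hrk : S.card ≤ Module.finrank F (LinearMap.range Ψ) := by
    rw [← Fintype.card_coe S, ← hspan]
    exact Submodule.finrank_mono hrange
  have hrn := LinearMap.finrank_range_add_finrank_ker Ψ
  have hW : Module.finrank F (((Fin n → F) ⊗[F] (Fin n → F)) →ₗ[F] (Fin m → F)) = n ^ 2 * m := by
    simp only [Module.finrank_linearMap, Module.finrank_tensorProduct, Module.finrank_fin_fun]
    ring
  rw [hW] at hrn
  -- final arithmetic
  have hcast : ((ℱ : ℤ) - 1) * ((s : ℤ) - ℱ) * t ≤ ((ℱ - 1) * ((s - ℱ) * t) : ℕ) := by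
    rcases Nat.eq_zero_or_pos ℱ with h | h
    · subst h
      simp only [Nat.zero_sub, zero_mul, Nat.cast_zero, zero_sub, neg_mul]
      have hst : (0:ℤ) ≤ (s:ℤ) * t := by positivity
      nlinarith
    · have h1 : (1:ℕ) ≤ ℱ := h
      have hcasteq : (((ℱ - 1) * ((s - ℱ) * t) : ℕ) : ℤ)
          = ((ℱ:ℤ) - 1) * (((s:ℤ) - ℱ) * t) := by
        rw [Nat.cast_mul, Nat.cast_mul, Nat.cast_sub h1, Nat.cast_sub hℱ, Nat.cast_one]
      rw [hcasteq, ← mul_assoc]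
  rw [hker]
  have hkerrk : (Module.finrank F (LinearMap.ker Ψ) : ℤ)
      = (n:ℤ)^2 * m - Module.finrank F (LinearMap.range Ψ) := by
    have := congrArg (Nat.cast : ℕ → ℤ) hrn
    push_cast at this ⊢
    linarith
  rw [hkerrk]
  have : ((ℱ - 1) * ((s - ℱ) * t) : ℕ) ≤ (Module.finrank F (LinearMap.range Ψ) : ℤ) := by
    exact_mod_cast le_trans hScard hrk
  linarith
end

section
/- Let F be a finite field, n, m, s, t, G ∈ ℕ with G ≤ t, and let P : F^n → F^n and Q : F^m → F^m be invertible F-linear maps. Suppose v₁, …, v_s ∈ F^n are linearly independent with P(v_i) = α_i v_i for scalars α_i ∈ F, w₁, …, w_t ∈ F^m are linearly independent with Q(w_k) = β_k w_k for scalars β_k ∈ F, and β₁, …, β_G are pairwise distinct. Then the dimension of Fix(P,Q) is at most n²m − s²(G−1). -/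
open TensorProduct

section AuxLemmas

open Module

private lemma aux_exists_dual_family {K V ι : Type*} [Field K] [AddCommGroup V] [Module K V]
    [DecidableEq ι] {v : ι → V} (hv : LinearIndependent K v) :
    ∃ d : ι → Module.Dual K V, ∀ i j, d i (v j) = if i = j then 1 else 0 := by
  classical
  have hs := hv.linearIndepOn_id
  let b := Basis.extend hs
  have hsub : Set.range v ⊆ hs.extend (Set.subset_univ _) := hs.subset_extend _
  let e : ι → hs.extend (Set.subset_univ _) := fun i => ⟨v i, hsub (Set.mem_range_self i)⟩
  refine ⟨fun i => b.coord (e i), fun i j => ?_⟩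
  have hb : b (e j) = v j := Basis.extend_apply_self hs (e j)
  rw [← hb, Basis.coord_apply, Basis.repr_self, Finsupp.single_apply]
  have hinj : Function.Injective e := fun a b hab => by
    apply hv.injective
    simpa [e, Subtype.ext_iff] using hab
  by_cases h : i = j
  · simp [h]
  · rw [if_neg (fun hej => h (hinj hej).symm), if_neg h]

private lemma aux_exists_dual_eigenvector {K V : Type*} [Field K] [AddCommGroup V] [Module K V]
    [FiniteDimensional K V] (f : V →ₗ[K] V) (c : K) {x : V} (hx : x ≠ 0)
    (hfx : f x = c • x) :
    ∃ ℓ : Module.Dual K V, ℓ ≠ 0 ∧ ∀ y, ℓ (f y) = c * ℓ y := by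
  set g := f - c • LinearMap.id with hgdef
  have hgx : g x = 0 := by simp [hgdef, hfx]
  have hr : LinearMap.range g < ⊤ := by
    rw [lt_top_iff_ne_top]
    intro htop
    have hsurj : Function.Surjective g := LinearMap.range_eq_top.mp htop
    have hinj : Function.Injective g :=
      (LinearMap.injective_iff_surjective).mpr hsurj
    exact hx (hinj (by simpa using hgx))
  obtain ⟨ℓ, hℓ0, hℓ⟩ :=
    (LinearMap.range g).exists_dual_map_eq_bot_of_lt_top hr inferInstance
  refine ⟨ℓ, hℓ0, fun y => ?_⟩
  have h1 : ℓ (g y) = 0 := by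
    have hmem : ℓ (g y) ∈ (LinearMap.range g).map ℓ := ⟨g y, ⟨y, rfl⟩, rfl⟩
    rw [hℓ] at hmem
    simpa using hmem
  have h2 : ℓ (f y) - c * ℓ y = 0 := by
    simpa [hgdef, map_sub, mul_comm, LinearMap.sub_apply] using h1
  exact sub_eq_zero.mp h2

private lemma aux_pi_surjective {K V : Type*} [Field K] [AddCommGroup V] [Module K V]
    {G : ℕ} {ℓ : Fin G → Module.Dual K V} (hℓ : LinearIndependent K ℓ) :
    Function.Surjective (LinearMap.pi ℓ : V →ₗ[K] (Fin G → K)) := by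
  rw [← LinearMap.range_eq_top]
  by_contra hne
  obtain ⟨φ, hφ0, hφ⟩ := Submodule.exists_dual_map_eq_bot_of_lt_top
    (p := LinearMap.range (LinearMap.pi ℓ)) (lt_top_iff_ne_top.mpr hne) inferInstance
  set c : Fin G → K := fun k => φ (Pi.single k (1 : K)) with hc
  have hrep : ∀ y : Fin G → K, φ y = ∑ k, y k * c k := by
    intro y
    have hy : y = ∑ k, y k • (Pi.single k (1 : K) : Fin G → K) := by
      funext j
      simp [Finset.sum_apply, Pi.single_apply, Finset.sum_ite_eq', mul_comm]
    calc φ y = φ (∑ k, y k • (Pi.single k (1 : K) : Fin G → K)) := by rw [← hy]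
    _ = ∑ k, y k * c k := by simp [map_sum, map_smul, hc, smul_eq_mul]
  have hzero : ∀ x : V, φ (LinearMap.pi ℓ x) = 0 := by
    intro x
    have hmem : φ (LinearMap.pi ℓ x) ∈ (LinearMap.range (LinearMap.pi ℓ)).map φ :=
      ⟨_, ⟨x, rfl⟩, rfl⟩
    rw [hφ] at hmem; simpa using hmem
  have hsum : ∑ k, c k • ℓ k = 0 := by
    refine LinearMap.ext fun x => ?_
    have h := hzero x
    rw [hrep] at h
    simpa [LinearMap.sum_apply, LinearMap.smul_apply, smul_eq_mul, mul_comm] using h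
  have hc0 : ∀ k, c k = 0 := Fintype.linearIndependent_iff.mp hℓ c hsum
  apply hφ0
  refine LinearMap.ext fun y => ?_
  rw [hrep]
  simp [hc0]

end AuxLemmas

/-- if `P` has linearly independent eigenvectors `v₁, …, v_s` with eigenvalues
`α₁, …, α_s`, `Q` has linearly independent eigenvectors `w₁, …, w_t` with eigenvalues
`β₁, …, β_t`, and `β₁, …, β_G` are pairwise distinct (`G ≤ t`), then
`dim Fix(P,Q) ≤ n²m − s²(G−1)`. -/
theorem stmt_16 (F : Type) [Field F] [Fintype F] (n m s t G : ℕ) (hG : G ≤ t)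
    (P : (Fin n → F) ≃ₗ[F] (Fin n → F)) (Q : (Fin m → F) ≃ₗ[F] (Fin m → F))
    (v : Fin s → (Fin n → F)) (hv : LinearIndependent F v)
    (α : Fin s → F) (hα : ∀ i, P (v i) = α i • v i)
    (w : Fin t → (Fin m → F)) (hw : LinearIndependent F w)
    (β : Fin t → F) (hβ : ∀ k, Q (w k) = β k • w k)
    (hdist : ∀ k l : Fin t, k.1 < G → l.1 < G → k ≠ l → β k ≠ β l) :
    (Module.finrank F (fixSubmodule P Q) : ℤ)
      ≤ (n : ℤ) ^ 2 * m - (s : ℤ) ^ 2 * ((G : ℤ) - 1) := by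
  classical
  -- embedding of `Fin G` into `Fin t`
  let e : Fin G → Fin t := fun k => ⟨k.1, lt_of_lt_of_le k.2 hG⟩
  -- dual eigenvectors of `Q`
  have hexℓ : ∀ k : Fin G, ∃ ℓk : Module.Dual F (Fin m → F), ℓk ≠ 0 ∧
      ∀ y, ℓk (Q y) = β (e k) * ℓk y :=
    fun k => aux_exists_dual_eigenvector (Q : (Fin m → F) →ₗ[F] (Fin m → F)) (β (e k))
      (hw.ne_zero (e k)) (hβ (e k))
  choose ℓ hℓ0 hℓQ using hexℓ
  -- the `ℓ k` are linearly independent, as eigenvectors of the dual map of `Q`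
  have hβinj : Function.Injective (fun k : Fin G => β (e k)) := by
    intro k l hkl
    by_contra hne
    exact hdist (e k) (e l) k.2 l.2 (by simpa [e, Fin.ext_iff] using hne) hkl
  have hLI : LinearIndependent F ℓ := by
    refine Module.End.eigenvectors_linearIndependent'
      ((Q : (Fin m → F) →ₗ[F] (Fin m → F)).dualMap) (fun k => β (e k)) hβinj ℓ (fun k => ?_)
    refine ⟨Module.End.mem_eigenspace_iff.mpr ?_, hℓ0 k⟩
    refine LinearMap.ext fun y => ?_
    simp [LinearMap.dualMap_apply, hℓQ k y, smul_eq_mul]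
  have hLsurj : Function.Surjective
      (LinearMap.pi ℓ : (Fin m → F) →ₗ[F] (Fin G → F)) := aux_pi_surjective hLI
  -- dual family for `v`
  obtain ⟨d, hd⟩ := aux_exists_dual_family hv
  -- the index type of "forbidden" triples
  let T := {x : Fin s × Fin s × Fin G // β (e x.2.2) ≠ α x.1 * α x.2.1}
  -- the test linear map
  let A : ((Fin n → F) ⊗[F] (Fin n → F) →ₗ[F] (Fin m → F)) →ₗ[F] (T → F) :=
    LinearMap.pi (fun x => (ℓ x.1.2.2) ∘ₗ (LinearMap.applyₗ (v x.1.1 ⊗ₜ[F] v x.1.2.1)))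
  -- `Fix(P,Q)` is contained in the kernel of `A`
  have hker : fixSubmodule P Q ≤ LinearMap.ker A := by
    intro φ hφ
    have hφ' : ∀ v₁ v₂ : Fin n → F, φ (P v₁ ⊗ₜ[F] P v₂) = Q (φ (v₁ ⊗ₜ[F] v₂)) := hφ
    rw [LinearMap.mem_ker]
    funext x
    obtain ⟨⟨i, j, k⟩, hx⟩ := x
    have h1 : φ (P (v i) ⊗ₜ[F] P (v j)) = (α i * α j) • φ (v i ⊗ₜ[F] v j) := by
      rw [hα i, hα j, TensorProduct.smul_tmul_smul, map_smul]
    have h2 := hφ' (v i) (v j)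
    have h3 : (α i * α j) * ℓ k (φ (v i ⊗ₜ[F] v j))
        = β (e k) * ℓ k (φ (v i ⊗ₜ[F] v j)) := by
      have hcg := congrArg (ℓ k) h2
      rw [hℓQ k, h1, map_smul] at hcg
      simpa [smul_eq_mul] using hcg
    have h4 : ℓ k (φ (v i ⊗ₜ[F] v j)) = 0 := by
      by_contra h0
      exact hx (mul_right_cancel₀ h0 h3.symm)
    simpa [A, LinearMap.pi_apply, LinearMap.applyₗ_apply_apply] using h4
  -- `A` is surjective
  have hAsurj : Function.Surjective A := by
    intro g
    set gfull : Fin s × Fin s × Fin G → F :=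
      fun x => if h : β (e x.2.2) ≠ α x.1 * α x.2.1 then g ⟨x, h⟩ else 0 with hgfull
    have hex : ∀ p : Fin s × Fin s, ∃ uvec : Fin m → F,
        ∀ k, ℓ k uvec = gfull (p.1, p.2, k) := by
      intro p
      obtain ⟨uvec, huvec⟩ := hLsurj (fun k => gfull (p.1, p.2, k))
      refine ⟨uvec, fun k => ?_⟩
      have := congrFun huvec k
      simpa [LinearMap.pi_apply] using this
    choose u hu using hex
    let Bil : (Fin n → F) →ₗ[F] (Fin n → F) →ₗ[F] (Fin m → F) :=
      LinearMap.mk₂ F (fun x y => ∑ p : Fin s × Fin s, (d p.1 x * d p.2 y) • u p)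
        (by intro x x' y; simp [map_add, add_mul, add_smul, Finset.sum_add_distrib])
        (by intro c x y; simp [map_smul, smul_eq_mul, mul_assoc, smul_smul, Finset.smul_sum])
        (by intro x y y'; simp [map_add, mul_add, add_smul, Finset.sum_add_distrib])
        (by intro c x y; simp [map_smul, smul_eq_mul, smul_smul, Finset.smul_sum, mul_left_comm])
    refine ⟨TensorProduct.lift Bil, ?_⟩
    funext x
    obtain ⟨⟨i, j, k⟩, hx⟩ := x
    have hval : (TensorProduct.lift Bil) (v i ⊗ₜ[F] v j) = u (i, j) := by
      rw [TensorProduct.lift.tmul]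
      show (∑ p : Fin s × Fin s, (d p.1 (v i) * d p.2 (v j)) • u p) = u (i, j)
      have hterm : ∀ p : Fin s × Fin s, (d p.1 (v i) * d p.2 (v j)) • u p
          = if p = (i, j) then u (i, j) else 0 := by
        intro p
        rcases eq_or_ne p (i, j) with hp | hp
        · subst hp; simp [hd]
        · have hij : p.1 ≠ i ∨ p.2 ≠ j := by
            by_contra hc
            push_neg at hc
            exact hp (Prod.ext hc.1 hc.2)
          rcases hij with h | h <;> simp [hd, h, hp]
      rw [Finset.sum_congr rfl (fun p _ => hterm p)]
      simp [Finset.sum_ite_eq']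
    show ℓ k ((TensorProduct.lift Bil) (v i ⊗ₜ[F] v j)) = g ⟨(i, j, k), hx⟩
    rw [hval, hu (i, j) k]
    simp only [hgfull]
    exact dif_pos hx
  -- dimension counting
  have hrankH : Module.finrank F ((Fin n → F) ⊗[F] (Fin n → F) →ₗ[F] (Fin m → F))
      = n * n * m := by
    rw [Module.finrank_linearMap, Module.finrank_tensorProduct]
    simp [Module.finrank_fin_fun]
  have hrange : Module.finrank F (LinearMap.range A) = Fintype.card T := by
    rw [LinearMap.range_eq_top.mpr hAsurj, finrank_top, Module.finrank_pi]
  have hrn := LinearMap.finrank_range_add_finrank_ker A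
  have hfix : Module.finrank F (fixSubmodule P Q) ≤ Module.finrank F (LinearMap.ker A) :=
    Submodule.finrank_mono hker
  -- counting the cardinality of `T`
  have hcardT : Fintype.card T
      = s * s * G - Fintype.card {x : Fin s × Fin s × Fin G //
          β (e x.2.2) = α x.1 * α x.2.1} := by
    rw [Fintype.card_subtype_compl]
    simp [Fintype.card_prod, mul_assoc]
  have hEqle : Fintype.card {x : Fin s × Fin s × Fin G //
      β (e x.2.2) = α x.1 * α x.2.1} ≤ s * s := by
    have hinj : Function.Injective
        (fun x : {x : Fin s × Fin s × Fin G // β (e x.2.2) = α x.1 * α x.2.1} =>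
          ((x.1.1, x.1.2.1) : Fin s × Fin s)) := by
      rintro ⟨⟨i, j, k⟩, hx⟩ ⟨⟨i', j', k'⟩, hx'⟩ hxy
      simp only [Prod.mk.injEq] at hxy
      obtain ⟨hi, hj⟩ := hxy
      subst hi; subst hj
      have hββ : β (e k) = β (e k') := hx.trans hx'.symm
      have hk : k = k' := by
        by_contra hne
        exact hdist (e k) (e k') k.2 k'.2 (by simpa [e, Fin.ext_iff] using hne) hββ
      subst hk; rfl
    calc Fintype.card {x : Fin s × Fin s × Fin G // β (e x.2.2) = α x.1 * α x.2.1}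
        ≤ Fintype.card (Fin s × Fin s) := Fintype.card_le_of_injective _ hinj
      _ = s * s := by simp
  have hEqleT : Fintype.card {x : Fin s × Fin s × Fin G //
      β (e x.2.2) = α x.1 * α x.2.1} ≤ s * s * G := by
    calc Fintype.card {x : Fin s × Fin s × Fin G // β (e x.2.2) = α x.1 * α x.2.1}
        ≤ Fintype.card (Fin s × Fin s × Fin G) := Fintype.card_subtype_le _
      _ = s * s * G := by simp [Fintype.card_prod, mul_assoc]
  -- final integer arithmetic
  rw [hrankH, hrange] at hrn
  have hcast1 : (Fintype.card T : ℤ)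
      = (s : ℤ) * s * G - (Fintype.card {x : Fin s × Fin s × Fin G //
          β (e x.2.2) = α x.1 * α x.2.1} : ℤ) := by
    rw [hcardT]
    push_cast [Nat.cast_sub hEqleT]
    ring
  have h5 : (Module.finrank F (fixSubmodule P Q) : ℤ)
      ≤ (Module.finrank F (LinearMap.ker A) : ℤ) := by exact_mod_cast hfix
  have h6 : (Fintype.card T : ℤ) + (Module.finrank F (LinearMap.ker A) : ℤ)
      = (n : ℤ) * n * m := by exact_mod_cast hrn
  have h7 : (Fintype.card {x : Fin s × Fin s × Fin G //
      β (e x.2.2) = α x.1 * α x.2.1} : ℤ) ≤ (s : ℤ) * s := by exact_mod_cast hEqle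
  have hring1 : (n : ℤ) ^ 2 * m = (n : ℤ) * n * m := by ring
  have hring2 : (s : ℤ) ^ 2 * ((G : ℤ) - 1) = (s : ℤ) * s * G - (s : ℤ) * s := by ring
  rw [hring1, hring2]
  linarith [h5, h6, h7, hcast1]
end
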